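/- arXiv:1910.13741 — 4 statements merged into one kernel-verified Lean document; each statement's English description precedes it below -/
import Mathlib

section
/- Let Φ : 𝔻 × 𝔻* → ℍ be the biholomorphism Φ(w₁,w₂) = (w₁w₂, w₂). The map f ↦ f∘Φ is a surjective isometry from the Dirichlet space D(ℍ) onto the Dirichlet space D(𝔻×𝔻) of the bidisc: if f(z₁,z₂) = Σ_{j≥0} Σ_{k≥−j} a_{jk} z₁^j z₂^k ∈ D(ℍ), then f∘Φ (which has only nonnegative powers of w₂ and hence extends holomorphically to 𝔻×𝔻) satisfies ‖f∘Φ‖²_{D(𝔻×𝔻)} = ‖f‖²_{D(ℍ)}, and every g ∈ D(𝔻×𝔻) arises as f∘Φ for some f ∈ D(ℍ). -/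
open MeasureTheory Real Complex Set Filter
open scoped ENNReal

set_option maxHeartbeats 1000000

noncomputable section

/-- The Hartogs triangle `ℍ = {(z₁,z₂) ∈ ℂ² : |z₁| < |z₂| < 1}`. -/
def Hartogs : Set (ℂ × ℂ) := {z | ‖z.1‖ < ‖z.2‖ ∧ ‖z.2‖ < 1}

/-- The bidisc `𝔻 × 𝔻`. -/
def diskProd : Set (ℂ × ℂ) := {w | ‖w.1‖ < 1 ∧ ‖w.2‖ < 1}

/-- `𝔻 × 𝔻*`, the disc times the punctured disc. -/
def diskPunct : Set (ℂ × ℂ) := {w | ‖w.1‖ < 1 ∧ ‖w.2‖ < 1 ∧ w.2 ≠ 0}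

/-- The biholomorphism `Φ : 𝔻 × 𝔻* → ℍ`, `Φ(w₁,w₂) = (w₁w₂, w₂)`. -/
def Phi (w : ℂ × ℂ) : ℂ × ℂ := (w.1 * w.2, w.2)

/-! Auxiliary material -/

def iota : ℕ × ℕ → ℕ × ℤ := fun p => (p.1, (p.2 : ℤ) - (p.1 : ℤ))

lemma iota_inj : Function.Injective iota := by
  intro p q h
  simp only [iota, Prod.mk.injEq] at h
  obtain ⟨h1, h2⟩ := h
  refine Prod.ext h1 ?_
  omega

lemma mem_range_iota {x : ℕ × ℤ} (hx : ¬ x.2 < -(x.1 : ℤ)) : x ∈ Set.range iota := by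
  push_neg at hx
  refine ⟨(x.1, (x.2 + x.1).toNat), Prod.ext rfl ?_⟩
  show ((x.2 + x.1).toNat : ℤ) - (x.1 : ℤ) = x.2
  omega

lemma prod_ext_of_iota {x : ℕ × ℤ} (hx : x ∈ Set.range iota) : True := trivial

lemma sqrt_bound {ι : Type*} {c : ι → ℂ} {wt : ι → ℝ}
    (hwt : ∀ i, (1:ℝ) ≤ wt i ∨ c i = 0)
    (hs : Summable fun i => wt i * ‖c i‖ ^ 2) :
    ∃ C : ℝ, 0 ≤ C ∧ ∀ i, ‖c i‖ ≤ C := by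
  have hnn : ∀ i, 0 ≤ wt i * ‖c i‖ ^ 2 := by
    intro i
    rcases hwt i with h | h
    · exact mul_nonneg (by linarith) (by positivity)
    · simp [h]
  refine ⟨Real.sqrt (∑' i, wt i * ‖c i‖ ^ 2), Real.sqrt_nonneg _, fun i => ?_⟩
  rcases hwt i with h | h
  · have h1 : ‖c i‖ ^ 2 ≤ wt i * ‖c i‖ ^ 2 := by nlinarith [sq_nonneg ‖c i‖]
    have h2 := Summable.le_tsum hs i (fun j _ => hnn j)
    have h3 := Real.sqrt_le_sqrt (h1.trans h2)
    rwa [Real.sqrt_sq (norm_nonneg _)] at h3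
  · simp [h, Real.sqrt_nonneg]

lemma summable_geom_norm {b : ℕ × ℕ → ℂ} {C : ℝ} (hC : ∀ jk, ‖b jk‖ ≤ C)
    {z₁ z₂ : ℂ} (h1 : ‖z₁‖ < 1) (h2 : ‖z₂‖ < 1) :
    Summable fun jk : ℕ × ℕ => ‖b jk * z₁ ^ jk.1 * z₂ ^ jk.2‖ := by
  have hs : Summable fun jk : ℕ × ℕ =>
      C * (‖z₁‖ ^ jk.1 * ‖z₂‖ ^ jk.2) :=
    ((summable_geometric_of_lt_one (norm_nonneg _) h1).mul_of_nonneg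
      (summable_geometric_of_lt_one (norm_nonneg _) h2)
      (fun n => pow_nonneg (norm_nonneg _) _)
      (fun n => pow_nonneg (norm_nonneg _) _)).mul_left C
  refine Summable.of_nonneg_of_le (fun _ => norm_nonneg _) (fun jk => ?_) hs
  rw [norm_mul, norm_mul, norm_pow, norm_pow, mul_assoc]
  gcongr
  exact hC jk

lemma hasFDerivAt_term (b : ℂ) (j k : ℕ) (x : ℂ × ℂ) :
    HasFDerivAt (fun y : ℂ × ℂ => b * y.1 ^ j * y.2 ^ k)
      (b • ((x.1 ^ j) • (((k : ℂ) * x.2 ^ (k - 1)) • ContinuousLinearMap.snd ℂ ℂ ℂ) +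
            (x.2 ^ k) • (((j : ℂ) * x.1 ^ (j - 1)) • ContinuousLinearMap.fst ℂ ℂ ℂ))) x := by
  have h1 : HasFDerivAt (fun y : ℂ × ℂ => y.1 ^ j)
      (((j : ℂ) * x.1 ^ (j - 1)) • ContinuousLinearMap.fst ℂ ℂ ℂ) x :=
    (hasDerivAt_pow j x.1).comp_hasFDerivAt x (hasFDerivAt_fst)
  have h2 : HasFDerivAt (fun y : ℂ × ℂ => y.2 ^ k)
      (((k : ℂ) * x.2 ^ (k - 1)) • ContinuousLinearMap.snd ℂ ℂ ℂ) x :=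
    (hasDerivAt_pow k x.2).comp_hasFDerivAt x (hasFDerivAt_snd)
  have h3 := (h1.mul h2).const_mul b
  simpa [mul_assoc] using h3

lemma norm_deriv_le {b : ℂ} {C r : ℝ} (hb : ‖b‖ ≤ C) (j k : ℕ) {x : ℂ × ℂ}
    (hx1 : ‖x.1‖ ≤ r) (hx2 : ‖x.2‖ ≤ r) (hr : 0 ≤ r) :
    ‖b • ((x.1 ^ j) • (((k : ℂ) * x.2 ^ (k - 1)) • ContinuousLinearMap.snd ℂ ℂ ℂ) +
          (x.2 ^ k) • (((j : ℂ) * x.1 ^ (j - 1)) • ContinuousLinearMap.fst ℂ ℂ ℂ))‖ ≤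
      C * (r ^ j * ((k : ℝ) * r ^ (k - 1 : ℕ)) + r ^ k * ((j : ℝ) * r ^ (j - 1 : ℕ))) := by
  have hC0 : 0 ≤ C := le_trans (norm_nonneg _) hb
  have hsnd : ‖ContinuousLinearMap.snd ℂ ℂ ℂ‖ ≤ 1 := ContinuousLinearMap.norm_snd_le ℂ ℂ ℂ
  have hfst : ‖ContinuousLinearMap.fst ℂ ℂ ℂ‖ ≤ 1 := ContinuousLinearMap.norm_fst_le ℂ ℂ ℂ
  have e1 : ‖(x.1 ^ j) • (((k : ℂ) * x.2 ^ (k - 1)) • ContinuousLinearMap.snd ℂ ℂ ℂ)‖ ≤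
      r ^ j * ((k : ℝ) * r ^ (k - 1 : ℕ)) := by
    calc ‖(x.1 ^ j) • (((k : ℂ) * x.2 ^ (k - 1)) • ContinuousLinearMap.snd ℂ ℂ ℂ)‖
        ≤ ‖x.1 ^ j‖ * ‖((k : ℂ) * x.2 ^ (k - 1)) • ContinuousLinearMap.snd ℂ ℂ ℂ‖ :=
          ContinuousLinearMap.opNorm_smul_le _ _
      _ ≤ ‖x.1 ^ j‖ * (‖(k : ℂ) * x.2 ^ (k - 1)‖ * ‖ContinuousLinearMap.snd ℂ ℂ ℂ‖) :=
          mul_le_mul_of_nonneg_left (ContinuousLinearMap.opNorm_smul_le _ _) (norm_nonneg _)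
      _ = ‖x.1‖ ^ j * ((k : ℝ) * ‖x.2‖ ^ (k - 1) * ‖ContinuousLinearMap.snd ℂ ℂ ℂ‖) := by
          rw [norm_pow, norm_mul, norm_pow]
          norm_num
      _ ≤ r ^ j * ((k : ℝ) * r ^ (k - 1 : ℕ) * 1) := by
          gcongr <;> first | positivity | assumption
      _ = r ^ j * ((k : ℝ) * r ^ (k - 1 : ℕ)) := by ring
  have e2 : ‖(x.2 ^ k) • (((j : ℂ) * x.1 ^ (j - 1)) • ContinuousLinearMap.fst ℂ ℂ ℂ)‖ ≤
      r ^ k * ((j : ℝ) * r ^ (j - 1 : ℕ)) := by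
    calc ‖(x.2 ^ k) • (((j : ℂ) * x.1 ^ (j - 1)) • ContinuousLinearMap.fst ℂ ℂ ℂ)‖
        ≤ ‖x.2 ^ k‖ * ‖((j : ℂ) * x.1 ^ (j - 1)) • ContinuousLinearMap.fst ℂ ℂ ℂ‖ :=
          ContinuousLinearMap.opNorm_smul_le _ _
      _ ≤ ‖x.2 ^ k‖ * (‖(j : ℂ) * x.1 ^ (j - 1)‖ * ‖ContinuousLinearMap.fst ℂ ℂ ℂ‖) :=
          mul_le_mul_of_nonneg_left (ContinuousLinearMap.opNorm_smul_le _ _) (norm_nonneg _)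
      _ = ‖x.2‖ ^ k * ((j : ℝ) * ‖x.1‖ ^ (j - 1) * ‖ContinuousLinearMap.fst ℂ ℂ ℂ‖) := by
          rw [norm_pow, norm_mul, norm_pow]
          norm_num
      _ ≤ r ^ k * ((j : ℝ) * r ^ (j - 1 : ℕ) * 1) := by
          gcongr <;> first | positivity | assumption
      _ = r ^ k * ((j : ℝ) * r ^ (j - 1 : ℕ)) := by ring
  calc ‖b • ((x.1 ^ j) • (((k : ℂ) * x.2 ^ (k - 1)) • ContinuousLinearMap.snd ℂ ℂ ℂ) +
          (x.2 ^ k) • (((j : ℂ) * x.1 ^ (j - 1)) • ContinuousLinearMap.fst ℂ ℂ ℂ))‖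
      ≤ ‖b‖ * ‖(x.1 ^ j) • (((k : ℂ) * x.2 ^ (k - 1)) • ContinuousLinearMap.snd ℂ ℂ ℂ) +
          (x.2 ^ k) • (((j : ℂ) * x.1 ^ (j - 1)) • ContinuousLinearMap.fst ℂ ℂ ℂ)‖ :=
        ContinuousLinearMap.opNorm_smul_le _ _
    _ ≤ C * (r ^ j * ((k : ℝ) * r ^ (k - 1 : ℕ)) + r ^ k * ((j : ℝ) * r ^ (j - 1 : ℕ))) :=
        mul_le_mul hb ((norm_add_le _ _).trans (add_le_add e1 e2)) (norm_nonneg _) hC0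

lemma summable_u {r : ℝ} (h0 : 0 < r) (h1 : r < 1) (C : ℝ) :
    Summable fun jk : ℕ × ℕ =>
      C * (r ^ jk.1 * ((jk.2 : ℝ) * r ^ (jk.2 - 1 : ℕ)) + r ^ jk.2 * ((jk.1 : ℝ) * r ^ (jk.1 - 1 : ℕ))) := by
  have hg : Summable fun n : ℕ => r ^ n := summable_geometric_of_lt_one h0.le h1
  have hj : Summable fun n : ℕ => (n : ℝ) * r ^ (n - 1 : ℕ) := by
    have h := summable_pow_mul_geometric_of_norm_lt_one 1
      (r := r) (by rw [Real.norm_eq_abs, abs_of_pos h0]; exact h1)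
    apply (h.mul_left r⁻¹).congr
    intro n
    cases n with
    | zero => simp
    | succ m =>
      have hr : r ≠ 0 := ne_of_gt h0
      simp only [pow_succ, Nat.add_sub_cancel, pow_one]
      field_simp
  have t1 : Summable fun jk : ℕ × ℕ => r ^ jk.1 * ((jk.2 : ℝ) * r ^ (jk.2 - 1 : ℕ)) :=
    hg.mul_of_nonneg hj (fun n => by positivity) (fun n => by positivity)
  have t2 : Summable fun jk : ℕ × ℕ => r ^ jk.2 * ((jk.1 : ℝ) * r ^ (jk.1 - 1 : ℕ)) := by
    have := hj.mul_of_nonneg hg (fun n => by positivity) (fun n => by positivity)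
    exact this.congr fun jk => mul_comm _ _
  exact (t1.add t2).mul_left C

lemma diffG {b : ℕ × ℕ → ℂ} {C : ℝ} (hC : ∀ jk, ‖b jk‖ ≤ C) :
    DifferentiableOn ℂ (fun w : ℂ × ℂ => ∑' jk : ℕ × ℕ, b jk * w.1 ^ jk.1 * w.2 ^ jk.2)
      diskProd := by
  intro w hw
  obtain ⟨hw1, hw2⟩ := hw
  set r : ℝ := (max ‖w.1‖ ‖w.2‖ + 1) / 2 with hrdef
  have hmax0 : 0 ≤ max ‖w.1‖ ‖w.2‖ :=
    le_trans (norm_nonneg _) (le_max_left _ _)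
  have hmax1 : max ‖w.1‖ ‖w.2‖ < 1 := max_lt hw1 hw2
  have hr0 : 0 < r := by rw [hrdef]; linarith
  have hr1 : r < 1 := by rw [hrdef]; linarith
  have hw1r : ‖w.1‖ < r := by
    have := le_max_left ‖w.1‖ ‖w.2‖; rw [hrdef]; linarith
  have hw2r : ‖w.2‖ < r := by
    have := le_max_right ‖w.1‖ ‖w.2‖; rw [hrdef]; linarith
  set s : Set (ℂ × ℂ) := Metric.ball 0 r ×ˢ Metric.ball 0 r with hsdef
  have hs : IsOpen s := Metric.isOpen_ball.prod Metric.isOpen_ball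
  have h's : IsPreconnected s :=
    ((convex_ball (0 : ℂ) r).prod (convex_ball (0 : ℂ) r)).isPreconnected
  have hws : w ∈ s := by
    refine Set.mem_prod.mpr ⟨?_, ?_⟩
    · simpa [Metric.mem_ball, dist_zero_right] using hw1r
    · simpa [Metric.mem_ball, dist_zero_right] using hw2r
  have hf0 : Summable fun jk : ℕ × ℕ => b jk * w.1 ^ jk.1 * w.2 ^ jk.2 :=
    (summable_geom_norm hC hw1 hw2).of_norm
  have key := hasFDerivAt_tsum_of_isPreconnected (summable_u hr0 hr1 C) hs h's
      (f := fun (jk : ℕ × ℕ) (y : ℂ × ℂ) => b jk * y.1 ^ jk.1 * y.2 ^ jk.2)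
      (f' := fun jk x =>
        b jk • ((x.1 ^ jk.1) • (((jk.2 : ℂ) * x.2 ^ (jk.2 - 1)) • ContinuousLinearMap.snd ℂ ℂ ℂ) +
          (x.2 ^ jk.2) • (((jk.1 : ℂ) * x.1 ^ (jk.1 - 1)) • ContinuousLinearMap.fst ℂ ℂ ℂ)))
      (fun jk x _ => hasFDerivAt_term (b jk) jk.1 jk.2 x)
      (fun jk x hx => norm_deriv_le (hC jk) jk.1 jk.2
        (le_of_lt (mem_ball_zero_iff.mp hx.1)) (le_of_lt (mem_ball_zero_iff.mp hx.2)) hr0.le)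
      hws hf0 hws
  exact key.differentiableAt.differentiableWithinAt


def mkA (b : ℕ × ℕ → ℂ) : ℕ × ℤ → ℂ := fun jk =>
  if 0 ≤ jk.2 + (jk.1 : ℤ) then b (jk.1, (jk.2 + (jk.1 : ℤ)).toNat) else 0

lemma mkA_iota (b : ℕ × ℕ → ℂ) (jk : ℕ × ℕ) : mkA b (iota jk) = b jk := by
  have h1 : (0:ℤ) ≤ (iota jk).2 + ((iota jk).1 : ℤ) := by
    show (0:ℤ) ≤ (jk.2 : ℤ) - (jk.1 : ℤ) + (jk.1 : ℤ); omega
  rw [mkA, if_pos h1]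
  have h2 : (((iota jk).2 + ((iota jk).1 : ℤ))).toNat = jk.2 := by
    show (((jk.2 : ℤ) - (jk.1 : ℤ)) + (jk.1 : ℤ)).toNat = jk.2; omega
  rw [h2]
  rfl

lemma mkA_vanish (b : ℕ × ℕ → ℂ) (jk : ℕ × ℤ) (h : jk.2 < -(jk.1 : ℤ)) : mkA b jk = 0 := by
  rw [mkA, if_neg (by omega)]

/-- `f ↦ f∘Φ` is a surjective isometry from the Dirichlet space `D(ℍ)`
(holomorphic `f = Σ_{j≥0,k≥−j} a_{jk} z₁ʲz₂ᵏ` with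
`‖f‖² = Σ (j+1)(j+k+1)|a_{jk}|² < ∞`) onto the Dirichlet space `D(𝔻×𝔻)` of the bidisc
(holomorphic `g = Σ_{j,k≥0} b_{jk} w₁ʲw₂ᵏ` with `‖g‖² = Σ (j+1)(k+1)|b_{jk}|² < ∞`):
`f∘Φ` has only nonnegative powers of `w₂`, extends holomorphically to `𝔻×𝔻` with
coefficients `b_{jk} = a_{j,k−j}`, `‖f∘Φ‖²_{D(𝔻×𝔻)} = ‖f‖²_{D(ℍ)}`, and every
`g ∈ D(𝔻×𝔻)` arises this way. -/
theorem statement4 :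
    (∀ (a : ℕ × ℤ → ℂ) (f : ℂ × ℂ → ℂ),
      (∀ jk : ℕ × ℤ, jk.2 < -(jk.1 : ℤ) → a jk = 0) →
      Summable (fun jk : ℕ × ℤ =>
        ((jk.1 : ℝ) + 1) * ((jk.1 : ℝ) + (jk.2 : ℝ) + 1) * ‖a jk‖ ^ 2) →
      (∀ z ∈ Hartogs, HasSum (fun jk : ℕ × ℤ => a jk * z.1 ^ jk.1 * z.2 ^ jk.2) (f z)) →
      ∃ g : ℂ × ℂ → ℂ, DifferentiableOn ℂ g diskProd ∧
        (∀ w ∈ diskProd, HasSum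
          (fun jk : ℕ × ℕ => a (jk.1, (jk.2 : ℤ) - (jk.1 : ℤ)) * w.1 ^ jk.1 * w.2 ^ jk.2)
          (g w)) ∧
        (∀ w ∈ diskPunct, g w = f (Phi w)) ∧
        ∑' jk : ℕ × ℕ, ((jk.1 : ℝ) + 1) * ((jk.2 : ℝ) + 1) *
            ‖a (jk.1, (jk.2 : ℤ) - (jk.1 : ℤ))‖ ^ 2 =
          ∑' jk : ℕ × ℤ, ((jk.1 : ℝ) + 1) * ((jk.1 : ℝ) + (jk.2 : ℝ) + 1) * ‖a jk‖ ^ 2) ∧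
    (∀ (b : ℕ × ℕ → ℂ) (g : ℂ × ℂ → ℂ),
      Summable (fun jk : ℕ × ℕ => ((jk.1 : ℝ) + 1) * ((jk.2 : ℝ) + 1) * ‖b jk‖ ^ 2) →
      (∀ w ∈ diskProd, HasSum (fun jk : ℕ × ℕ => b jk * w.1 ^ jk.1 * w.2 ^ jk.2) (g w)) →
      ∃ (a : ℕ × ℤ → ℂ) (f : ℂ × ℂ → ℂ),
        (∀ jk : ℕ × ℤ, jk.2 < -(jk.1 : ℤ) → a jk = 0) ∧
        Summable (fun jk : ℕ × ℤ =>
          ((jk.1 : ℝ) + 1) * ((jk.1 : ℝ) + (jk.2 : ℝ) + 1) * ‖a jk‖ ^ 2) ∧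
        DifferentiableOn ℂ f Hartogs ∧
        (∀ z ∈ Hartogs, HasSum (fun jk : ℕ × ℤ => a jk * z.1 ^ jk.1 * z.2 ^ jk.2) (f z)) ∧
        (∀ w ∈ diskPunct, g w = f (Phi w)) ∧
        ∑' jk : ℕ × ℕ, ((jk.1 : ℝ) + 1) * ((jk.2 : ℝ) + 1) * ‖b jk‖ ^ 2 =
          ∑' jk : ℕ × ℤ, ((jk.1 : ℝ) + 1) * ((jk.1 : ℝ) + (jk.2 : ℝ) + 1) * ‖a jk‖ ^ 2) := by
  constructor
  · -- Part 1
    intro a f ha hsum hf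
    have hwt : ∀ jk : ℕ × ℤ, (1:ℝ) ≤ ((jk.1 : ℝ) + 1) * ((jk.1 : ℝ) + (jk.2 : ℝ) + 1) ∨ a jk = 0 := by
      intro jk
      by_cases h : jk.2 < -(jk.1 : ℤ)
      · exact Or.inr (ha jk h)
      · left
        push_neg at h
        have h2 : (((-(jk.1 : ℤ)) : ℤ) : ℝ) ≤ ((jk.2 : ℤ) : ℝ) := Int.cast_le.mpr h
        push_cast at h2
        have hj : (0:ℝ) ≤ (jk.1 : ℝ) := Nat.cast_nonneg _
        nlinarith
    obtain ⟨C, hC0, hC⟩ := sqrt_bound hwt hsum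
    have hCb : ∀ jk : ℕ × ℕ, ‖a (jk.1, (jk.2 : ℤ) - (jk.1 : ℤ))‖ ≤ C := fun jk => hC _
    have ha_notrange : ∀ x ∉ Set.range iota, a x = 0 := by
      intro x hx
      apply ha x
      by_contra h
      exact hx (mem_range_iota h)
    refine ⟨fun w => ∑' jk : ℕ × ℕ,
        a (jk.1, (jk.2 : ℤ) - (jk.1 : ℤ)) * w.1 ^ jk.1 * w.2 ^ jk.2,
      diffG hCb, ?_, ?_, ?_⟩
    · intro w hw
      exact ((summable_geom_norm hCb hw.1 hw.2).of_norm).hasSum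
    · intro w hw
      obtain ⟨hw1, hw2, hw2ne⟩ := hw
      have habs2 : 0 < ‖w.2‖ := norm_pos_iff.mpr hw2ne
      have hPhi : Phi w ∈ Hartogs := by
        constructor
        · show ‖w.1 * w.2‖ < ‖w.2‖
          rw [norm_mul]
          exact mul_lt_of_lt_one_left habs2 hw1
        · exact hw2
      have hsumPhi := hf (Phi w) hPhi
      have hvan : ∀ x ∉ Set.range iota,
          a x * (Phi w).1 ^ x.1 * (Phi w).2 ^ x.2 = 0 := by
        intro x hx
        rw [ha_notrange x hx, zero_mul, zero_mul]
      have h2 := (iota_inj.hasSum_iff hvan).2 hsumPhi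
      have h3 : ((fun x : ℕ × ℤ => a x * (Phi w).1 ^ x.1 * (Phi w).2 ^ x.2) ∘ iota) =
          fun jk : ℕ × ℕ =>
            a (jk.1, (jk.2 : ℤ) - (jk.1 : ℤ)) * w.1 ^ jk.1 * w.2 ^ jk.2 := by
        funext jk
        show a (iota jk) * (w.1 * w.2) ^ jk.1 * w.2 ^ ((jk.2 : ℤ) - (jk.1 : ℤ)) = _
        rw [zpow_sub₀ hw2ne, zpow_natCast, zpow_natCast, mul_pow]
        rw [iota]
        field_simp
      rw [h3] at h2
      exact h2.tsum_eq
    · have hsupp : Function.support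
          (fun x : ℕ × ℤ => ((x.1 : ℝ) + 1) * ((x.1 : ℝ) + (x.2 : ℝ) + 1) * ‖a x‖ ^ 2) ⊆
          Set.range iota := by
        intro x hx
        by_contra h
        apply hx
        simp [ha_notrange x h]
      have heq := iota_inj.tsum_eq hsupp
      rw [← heq]
      apply tsum_congr
      intro jk
      show ((jk.1 : ℝ) + 1) * ((jk.2 : ℝ) + 1) * ‖a (jk.1, (jk.2 : ℤ) - (jk.1 : ℤ))‖ ^ 2 =
        (((iota jk).1 : ℝ) + 1) * (((iota jk).1 : ℝ) + ((iota jk).2 : ℝ) + 1) * ‖a (iota jk)‖ ^ 2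
      rw [iota]
      push_cast
      ring
  · -- Part 2
    intro b g hb hg
    have hwtb : ∀ jk : ℕ × ℕ, (1:ℝ) ≤ ((jk.1 : ℝ) + 1) * ((jk.2 : ℝ) + 1) ∨ b jk = 0 := by
      intro jk
      left
      have h1 : (0:ℝ) ≤ (jk.1 : ℝ) := Nat.cast_nonneg _
      have h2 : (0:ℝ) ≤ (jk.2 : ℝ) := Nat.cast_nonneg _
      nlinarith
    obtain ⟨C, hC0, hC⟩ := sqrt_bound hwtb hb
    have ha_notrange : ∀ x ∉ Set.range iota, mkA b x = 0 := by
      intro x hx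
      apply mkA_vanish
      by_contra h
      exact hx (mem_range_iota h)
    have hz2ne : ∀ z ∈ Hartogs, z.2 ≠ 0 := by
      intro z hz h0
      have h1 := hz.1
      rw [h0, norm_zero] at h1
      exact absurd h1 (not_lt.mpr (norm_nonneg _))
    have hzmaps : ∀ z ∈ Hartogs, ‖z.1 / z.2‖ < 1 ∧ ‖z.2‖ < 1 := by
      intro z hz
      refine ⟨?_, hz.2⟩
      rw [norm_div, div_lt_one (norm_pos_iff.mpr (hz2ne z hz))]
      exact hz.1
    refine ⟨mkA b, fun z => ∑' jk : ℕ × ℕ, b jk * (z.1 / z.2) ^ jk.1 * z.2 ^ jk.2,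
      mkA_vanish b, ?_, ?_, ?_, ?_, ?_⟩
    · -- Summability
      refine (iota_inj.summable_iff
        (f := fun x : ℕ × ℤ => ((x.1 : ℝ) + 1) * ((x.1 : ℝ) + (x.2 : ℝ) + 1) * ‖mkA b x‖ ^ 2)
        ?_).1 ?_
      · intro x hx
        simp [ha_notrange x hx]
      · apply hb.congr
        intro jk
        show ((jk.1 : ℝ) + 1) * ((jk.2 : ℝ) + 1) * ‖b jk‖ ^ 2 =
          (((iota jk).1 : ℝ) + 1) * (((iota jk).1 : ℝ) + ((iota jk).2 : ℝ) + 1) * ‖mkA b (iota jk)‖ ^ 2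
        rw [mkA_iota, iota]
        push_cast
        ring
    · -- DifferentiableOn
      have hG := diffG hC
      have hpsi : DifferentiableOn ℂ (fun z : ℂ × ℂ => ((z.1 / z.2, z.2) : ℂ × ℂ)) Hartogs := by
        intro z hz
        have d1 : DifferentiableAt ℂ (fun z : ℂ × ℂ => z.1) z := differentiableAt_fst
        have d2 : DifferentiableAt ℂ (fun z : ℂ × ℂ => z.2) z := differentiableAt_snd
        have d3 : DifferentiableAt ℂ (fun z : ℂ × ℂ => z.1 / z.2) z := by
          have := d1.mul (d2.inv (hz2ne z hz))
          simp only [div_eq_mul_inv]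
          exact this
        have d4 : DifferentiableAt ℂ (fun z : ℂ × ℂ => ((z.1 / z.2, z.2) : ℂ × ℂ)) z := d3.prodMk d2
        exact d4.differentiableWithinAt
      have hmaps : Set.MapsTo (fun z : ℂ × ℂ => ((z.1 / z.2, z.2) : ℂ × ℂ)) Hartogs diskProd :=
        fun z hz => hzmaps z hz
      exact hG.comp hpsi hmaps
    · -- HasSum on Hartogs
      intro z hz
      obtain ⟨hd1, hd2⟩ := hzmaps z hz
      have hz2 : z.2 ≠ 0 := hz2ne z hz
      have hsum := ((summable_geom_norm hC hd1 hd2).of_norm).hasSum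
      apply (iota_inj.hasSum_iff (fun x hx => by rw [ha_notrange x hx, zero_mul, zero_mul])).1
      have e : (fun jk : ℕ × ℕ => b jk * (z.1 / z.2) ^ jk.1 * z.2 ^ jk.2) =
          ((fun x : ℕ × ℤ => mkA b x * z.1 ^ x.1 * z.2 ^ x.2) ∘ iota) := by
        funext jk
        show b jk * (z.1 / z.2) ^ jk.1 * z.2 ^ jk.2 =
          mkA b (iota jk) * z.1 ^ jk.1 * z.2 ^ ((jk.2 : ℤ) - (jk.1 : ℤ))
        rw [mkA_iota, zpow_sub₀ hz2, zpow_natCast, zpow_natCast, div_pow]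
        field_simp
        try ring
      rw [← e]
      exact hsum
    · -- g w = f (Phi w)
      intro w hw
      obtain ⟨hw1, hw2, hw2ne⟩ := hw
      have h1 : (∑' jk : ℕ × ℕ, b jk * ((Phi w).1 / (Phi w).2) ^ jk.1 * (Phi w).2 ^ jk.2) =
          ∑' jk : ℕ × ℕ, b jk * w.1 ^ jk.1 * w.2 ^ jk.2 := by
        apply tsum_congr
        intro jk
        show b jk * (w.1 * w.2 / w.2) ^ jk.1 * w.2 ^ jk.2 = _
        rw [mul_div_cancel_right₀ _ hw2ne]
      show g w = ∑' jk : ℕ × ℕ, b jk * ((Phi w).1 / (Phi w).2) ^ jk.1 * (Phi w).2 ^ jk.2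
      rw [h1]
      exact (hg w ⟨hw1, hw2⟩).tsum_eq.symm
    · -- norm equality
      have hsupp : Function.support
          (fun x : ℕ × ℤ => ((x.1 : ℝ) + 1) * ((x.1 : ℝ) + (x.2 : ℝ) + 1) * ‖mkA b x‖ ^ 2) ⊆
          Set.range iota := by
        intro x hx
        by_contra h
        apply hx
        simp [ha_notrange x h]
      rw [← iota_inj.tsum_eq hsupp]
      apply tsum_congr
      intro jk
      show ((jk.1 : ℝ) + 1) * ((jk.2 : ℝ) + 1) * ‖b jk‖ ^ 2 =
        (((iota jk).1 : ℝ) + 1) * (((iota jk).1 : ℝ) + ((iota jk).2 : ℝ) + 1) * ‖mkA b (iota jk)‖ ^ 2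
      rw [mkA_iota, iota]
      push_cast
      ring
end
end

section
/- Let ν > −1 and let K_ν denote the reproducing kernel of A²_ν(ℍ). There exists a constant c_ν > 0 such that for all ((z₁,z₂),(w₁,w₂)) ∈ ℍ × ℍ, |K_ν((z₁,z₂),(w₁,w₂))| ≤ c_ν |z₂\overline{w₂}|^{−1−⌈ν/2⌉} |1 − (z₁\overline{w₁})/(z₂\overline{w₂})|^{−(ν+2)} |1 − z₂\overline{w₂}|^{−(ν+2)}, where ⌈·⌉ is the ceiling function. -/
open MeasureTheory Real Complex Set Filter
open scoped ENNReal

noncomputable section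

/-- The weight `|z₂|^ν (1−|z₁/z₂|²)^ν (1−|z₂|²)^ν`. -/
def hDensity (ν : ℝ) (z : ℂ × ℂ) : ℝ :=
  ‖z.2‖ ^ ν * (1 - ‖z.1 / z.2‖ ^ 2) ^ ν * (1 - ‖z.2‖ ^ 2) ^ ν

/-- The normalization constant `C_ν`. -/
def Cnu (ν : ℝ) : ℝ :=
  ((ν + 1) * Real.Gamma (3 / 2 * ν + 3)) /
    (2 ^ (ν / 2) * π ^ 2 * Real.Gamma (ν + 1) * Real.Gamma (ν / 2 + 2))

/-- The measure `dμ_ν = C_ν 2^{ν/2} |z₂|^ν (1−|z₁/z₂|²)^ν (1−|z₂|²)^ν dz` on `ℍ`. -/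
def muNu (ν : ℝ) : Measure (ℂ × ℂ) :=
  (volume.restrict Hartogs).withDensity
    fun z => ENNReal.ofReal (Cnu ν * 2 ^ (ν / 2) * hDensity ν z)

/-- The hypergeometric function
`F(α,β;γ;z) = (Γ(γ)/(Γ(α)Γ(β))) Σ_{k≥0} Γ(k+α)Γ(k+β)/(Γ(k+γ)k!) zᵏ`. -/
def hyperF (α β γ z : ℂ) : ℂ :=
  (Complex.Gamma γ / (Complex.Gamma α * Complex.Gamma β)) *
    ∑' k : ℕ, Complex.Gamma ((k : ℂ) + α) * Complex.Gamma ((k : ℂ) + β) /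
      (Complex.Gamma ((k : ℂ) + γ) * (Nat.factorial k : ℂ)) * z ^ k

/-- The constant `a_ν = Γ(ν/2+2)Γ((3/2)ν−⌈ν/2⌉+2)/(Γ((3/2)ν+3)Γ(ν/2−⌈ν/2⌉+1))`. -/
def aNu (ν : ℝ) : ℝ :=
  Real.Gamma (ν / 2 + 2) * Real.Gamma (3 / 2 * ν - (⌈ν / 2⌉ : ℝ) + 2) /
    (Real.Gamma (3 / 2 * ν + 3) * Real.Gamma (ν / 2 - (⌈ν / 2⌉ : ℝ) + 1))

/-- The reproducing kernel of `A²_ν(ℍ)`: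
`K_ν(z,w) = a_ν (z₂w̄₂)^{−1−⌈ν/2⌉} (1 − z₁w̄₁/(z₂w̄₂))^{−(ν+2)}
F((3/2)ν−⌈ν/2⌉+2, 1; ν/2−⌈ν/2⌉+1; z₂w̄₂)`. -/
def KNu (ν : ℝ) (z w : ℂ × ℂ) : ℂ :=
  (aNu ν : ℂ) * (z.2 * (starRingEnd ℂ) w.2) ^ (-1 - ⌈ν / 2⌉ : ℤ) *
    (1 - z.1 * (starRingEnd ℂ) w.1 / (z.2 * (starRingEnd ℂ) w.2)) ^ ((-(ν + 2) : ℝ) : ℂ) *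
    hyperF ((3 / 2 * ν - (⌈ν / 2⌉ : ℝ) + 2 : ℝ) : ℂ) 1 ((ν / 2 - (⌈ν / 2⌉ : ℝ) + 1 : ℝ) : ℂ)
      (z.2 * (starRingEnd ℂ) w.2)


namespace St11

/-- coefficients of `(1-q)^{-a}` -/
def bseq (a : ℝ) : ℕ → ℝ
  | 0 => 1
  | j + 1 => bseq a j * (a + j) / (j + 1)

lemma bseq_succ_mul (a : ℝ) (j : ℕ) : ((j : ℝ) + 1) * bseq a (j + 1) = bseq a j * (a + j) := by
  have : ((j : ℝ) + 1) ≠ 0 := by positivity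
  rw [bseq]; field_simp

lemma abs_bseq_le (a : ℝ) (j : ℕ) :
    |bseq a j| ≤ ((⌈|a|⌉₊ + j).choose ⌈|a|⌉₊ : ℝ) := by
  set K := ⌈|a|⌉₊ with hK
  induction j with
  | zero => simp [bseq]
  | succ j ih =>
    have hchoose : ((K + j + 1).choose K : ℝ) * (j + 1) = ((K + j).choose K : ℝ) * (K + j + 1) := by
      have h1 : (K + j).choose j = (K + j).choose K := by
        have := Nat.choose_symm (Nat.le_add_right K j)
        rwa [Nat.add_sub_cancel_left] at this
      have h2 : (K + j + 1).choose (j + 1) = (K + j + 1).choose K := by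
        have := Nat.choose_symm (by omega : K ≤ K + j + 1)
        rwa [show K + j + 1 - K = j + 1 by omega] at this
      have h3 := Nat.add_one_mul_choose_eq (K + j) j
      rw [h1] at h3
      rw [h2] at h3
      have h4 : (K + j + 1).choose K * (j + 1) = (K + j).choose K * (K + j + 1) := by
        rw [Nat.mul_comm ((K+j).choose K) (K+j+1)]; exact h3.symm
      exact_mod_cast congrArg (fun n : ℕ => (n : ℝ)) h4
    have hj1 : (0:ℝ) < (j : ℝ) + 1 := by positivity
    have habs : |bseq a (j+1)| = |bseq a j| * |a + j| / ((j:ℝ) + 1) := by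
      rw [bseq, abs_div, abs_mul, abs_of_pos hj1]
    rw [habs]
    have haj : |a + (j:ℝ)| ≤ (K : ℝ) + j + 1 := by
      have h1 : |a| ≤ (K : ℝ) := Nat.le_ceil _
      calc |a + (j:ℝ)| ≤ |a| + |(j:ℝ)| := abs_add_le _ _
        _ ≤ (K:ℝ) + j + 1 := by
            rw [_root_.abs_of_nonneg (by positivity : (0:ℝ) ≤ (j:ℝ))]; linarith
    have h4 : |bseq a j| * |a + j| ≤ ((K + j).choose K : ℝ) * ((K:ℝ) + j + 1) :=
      mul_le_mul ih haj (abs_nonneg _) (by positivity)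
    rw [div_le_iff₀ hj1]
    calc |bseq a j| * |a + (j:ℝ)| ≤ ((K + j).choose K : ℝ) * ((K:ℝ) + j + 1) := h4
      _ = ((K + (j+1)).choose K : ℝ) * ((j:ℝ) + 1) := by
          rw [show K + (j+1) = K + j + 1 by omega]; linarith [hchoose]

lemma summable_bseq_mul (a : ℝ) {r : ℝ} (h0 : 0 ≤ r) (hr : r < 1) :
    Summable (fun j => |bseq a j| * ((j : ℝ) + 1) * r ^ j) := by
  set K := ⌈|a|⌉₊ with hK
  have hb : ∀ j : ℕ, |bseq a j| * ((j : ℝ) + 1) * r ^ j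
      ≤ ((K:ℝ) + 1) ^ K * (((j:ℝ) + 1) ^ (K + 1) * r ^ j) := by
    intro j
    have h1 : |bseq a j| ≤ ((K + j).choose K : ℝ) := abs_bseq_le a j
    have h2 : ((K + j).choose K : ℝ) ≤ ((K:ℝ) + j) ^ K := by
      calc ((K + j).choose K : ℝ) ≤ (((K + j) ^ K : ℕ) : ℝ) := by
            exact_mod_cast Nat.choose_le_pow (K+j) K
        _ = ((K:ℝ) + j) ^ K := by push_cast; ring
    have h3 : ((K:ℝ) + j) ^ K ≤ (((K:ℝ) + 1) * ((j:ℝ) + 1)) ^ K := by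
      apply pow_le_pow_left₀ (by positivity)
      nlinarith [Nat.cast_nonneg (α := ℝ) K, Nat.cast_nonneg (α := ℝ) j]
    have h4 : |bseq a j| ≤ ((K:ℝ)+1) ^ K * ((j:ℝ)+1) ^ K := by
      calc |bseq a j| ≤ ((K:ℝ) + j) ^ K := le_trans h1 h2
        _ ≤ (((K:ℝ) + 1) * ((j:ℝ) + 1)) ^ K := h3
        _ = ((K:ℝ)+1) ^ K * ((j:ℝ)+1) ^ K := mul_pow _ _ _
    calc |bseq a j| * ((j : ℝ) + 1) * r ^ j
        ≤ (((K:ℝ)+1) ^ K * ((j:ℝ)+1) ^ K) * ((j : ℝ) + 1) * r ^ j := by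
          apply mul_le_mul_of_nonneg_right (mul_le_mul_of_nonneg_right h4 (by positivity)) (by positivity)
      _ = ((K:ℝ) + 1) ^ K * (((j:ℝ) + 1) ^ (K + 1) * r ^ j) := by ring
  apply Summable.of_nonneg_of_le (fun j => by positivity) hb
  apply Summable.mul_left
  have hexp : ∀ j : ℕ, ((j:ℝ) + 1) ^ (K + 1) * r ^ j
      = ∑ i ∈ Finset.range (K + 2), ((j:ℝ) ^ i * ((K+1).choose i : ℝ)) * r ^ j := by
    intro j
    rw [← Finset.sum_mul]
    congr 1
    have := add_pow (j:ℝ) 1 (K + 1)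
    simp only [one_pow, mul_one] at this
    rw [this]
  apply Summable.congr _ (fun j => (hexp j).symm)
  apply summable_sum (s := Finset.range (K + 2))
  intro i _
  have hgeom : Summable (fun j : ℕ => (j:ℝ) ^ i * r ^ j) :=
    summable_pow_mul_geometric_of_norm_lt_one i (by rwa [Real.norm_eq_abs, _root_.abs_of_nonneg h0])
  have : (fun j : ℕ => ((j:ℝ) ^ i * ((K+1).choose i : ℝ)) * r ^ j)
      = (fun j : ℕ => ((K+1).choose i : ℝ) * ((j:ℝ) ^ i * r ^ j)) := by
    funext j; ring
  rw [this]
  exact hgeom.mul_left _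


lemma summable_bseq_norm (a : ℝ) {q : ℂ} (hq : ‖q‖ < 1) :
    Summable (fun j => ‖(bseq a j : ℂ) * q ^ j‖) := by
  refine Summable.of_nonneg_of_le (fun j => norm_nonneg _) (fun j => ?_)
    (summable_bseq_mul a (norm_nonneg q) hq)
  rw [norm_mul, norm_pow]
  have h1 : ‖(bseq a j : ℂ)‖ = |bseq a j| := by
    rw [Complex.norm_real, Real.norm_eq_abs]
  rw [h1]
  have hge : (1:ℝ) ≤ (j:ℝ) + 1 := by
    have := Nat.cast_nonneg (α := ℝ) j
    linarith
  have h2 : |bseq a j| ≤ |bseq a j| * ((j:ℝ)+1) :=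
    le_mul_of_one_le_right (abs_nonneg _) hge
  exact mul_le_mul_of_nonneg_right h2 (pow_nonneg (norm_nonneg q) j)

lemma summable_bseq (a : ℝ) {q : ℂ} (hq : ‖q‖ < 1) :
    Summable (fun j => (bseq a j : ℂ) * q ^ j) :=
  (summable_bseq_norm a hq).of_norm

lemma deriv_term_bound (a : ℝ) {r : ℝ} (hr0 : 0 < r) {y : ℂ} (hy : ‖y‖ ≤ r) (n : ℕ) :
    ‖(bseq a n : ℂ) * ((n : ℂ) * y ^ (n - 1))‖ ≤ |bseq a n| * ((n:ℝ) + 1) * r ^ n / r := by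
  rw [norm_mul, norm_mul, norm_pow, Complex.norm_natCast, Complex.norm_real, Real.norm_eq_abs]
  match n with
  | 0 => simp; positivity
  | (k+1) =>
    have h1 : ‖y‖ ^ (k + 1 - 1) ≤ r ^ k := by
      simpa using pow_le_pow_left₀ (norm_nonneg y) hy k
    have hrk : r ^ (k+1) / r = r ^ k := by
      rw [pow_succ, mul_div_cancel_right₀ _ hr0.ne']
    rw [mul_div_assoc, hrk]
    have hb := abs_nonneg (bseq a (k+1))
    have hX : (0:ℝ) ≤ ‖y‖ ^ (k+1-1) := by positivity
    have hR : (0:ℝ) ≤ r ^ k := by positivity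
    simp only [Nat.add_sub_cancel] at h1 ⊢
    push_cast
    nlinarith [mul_le_mul_of_nonneg_left h1 (mul_nonneg hb (by positivity : (0:ℝ) ≤ (k:ℝ)+1)),
      mul_nonneg hb hR]

lemma summable_deriv (a : ℝ) {q : ℂ} (hq : ‖q‖ < 1) :
    Summable (fun n => (bseq a n : ℂ) * ((n : ℂ) * q ^ (n - 1))) := by
  set r := (1 + ‖q‖) / 2 with hr
  have hr0 : 0 < r := by positivity
  have hr1 : r < 1 := by rw [hr]; linarith
  have hqr : ‖q‖ ≤ r := by rw [hr]; linarith
  apply Summable.of_norm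
  apply Summable.of_nonneg_of_le (fun n => norm_nonneg _) (fun n => deriv_term_bound a hr0 hqr n)
  exact (summable_bseq_mul a hr0.le hr1).div_const r

lemma hasDerivAt_Fb (a : ℝ) {q : ℂ} (hq : ‖q‖ < 1) :
    HasDerivAt (fun z : ℂ => ∑' j : ℕ, (bseq a j : ℂ) * z ^ j)
      (∑' j : ℕ, (bseq a j : ℂ) * ((j : ℂ) * q ^ (j - 1))) q := by
  set r := (1 + ‖q‖) / 2 with hr
  have hr0 : 0 < r := by positivity
  have hr1 : r < 1 := by rw [hr]; linarith
  have hqr : ‖q‖ < r := by rw [hr]; linarith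
  apply hasDerivAt_tsum_of_isPreconnected
    (u := fun n => |bseq a n| * ((n:ℝ) + 1) * r ^ n / r)
    (t := Metric.ball (0 : ℂ) r)
    (g := fun n z => (bseq a n : ℂ) * z ^ n)
    (g' := fun n y => (bseq a n : ℂ) * ((n : ℂ) * y ^ (n - 1)))
    ((summable_bseq_mul a hr0.le hr1).div_const r)
    Metric.isOpen_ball (convex_ball (0:ℂ) r).isPreconnected
  · intro n y _
    exact (hasDerivAt_pow n y).const_mul ((bseq a n : ℂ))
  · intro n y hy
    exact deriv_term_bound a hr0 (le_of_lt (mem_ball_zero_iff.mp hy)) n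
  · exact mem_ball_zero_iff.mpr (by rw [norm_zero]; exact hr0)
  · exact summable_bseq a (by simpa using one_pos : ‖(0:ℂ)‖ < 1)
  · exact mem_ball_zero_iff.mpr hqr

lemma one_sub_mul_deriv (a : ℝ) {q : ℂ} (hq : ‖q‖ < 1) :
    (1 - q) * (∑' j : ℕ, (bseq a j : ℂ) * ((j : ℂ) * q ^ (j - 1)))
      = (a : ℂ) * ∑' j : ℕ, (bseq a j : ℂ) * q ^ j := by
  have Sd := summable_deriv a hq
  set T : ℕ → ℂ := fun j => (bseq a j : ℂ) * ((j : ℂ) * q ^ (j - 1)) with hT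
  have h1 : ∑' j, T j = ∑' j, ((bseq a (j+1) : ℂ) * ((j:ℂ)+1)) * q ^ j := by
    rw [Sd.tsum_eq_zero_add]
    have hT0 : T 0 = 0 := by simp [hT]
    rw [hT0, zero_add]
    apply tsum_congr
    intro j
    simp only [hT]
    push_cast
    ring_nf
  have h2 : q * ∑' j, T j = ∑' j, ((bseq a j : ℂ) * (j:ℂ)) * q ^ j := by
    rw [← tsum_mul_left]
    apply tsum_congr
    intro j
    match j with
    | 0 => simp [hT]
    | (k+1) =>
      simp only [hT]
      have : ((k:ℕ)+1-1) = k := rfl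
      push_cast
      rw [pow_succ]
      ring
  have S1 : Summable (fun j => ((bseq a (j+1) : ℂ) * ((j:ℂ)+1)) * q ^ j) := by
    have := (summable_nat_add_iff 1).mpr Sd
    apply this.congr
    intro j
    simp only [hT]
    push_cast
    ring_nf
  have S2 : Summable (fun j => ((bseq a j : ℂ) * (j:ℂ)) * q ^ j) := by
    have := Sd.mul_left q
    apply this.congr
    intro j
    match j with
    | 0 => simp [hT]
    | (k+1) =>
      simp only [hT]
      have : ((k:ℕ)+1-1) = k := rfl
      push_cast
      rw [pow_succ]
      ring
  rw [sub_mul, one_mul, h2, h1, ← S1.tsum_sub S2]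
  rw [← tsum_mul_left]
  apply tsum_congr
  intro j
  have key : ((j : ℝ) + 1) * bseq a (j + 1) = bseq a j * (a + j) := bseq_succ_mul a j
  have keyC : ((j : ℂ) + 1) * (bseq a (j+1) : ℂ) = (bseq a j : ℂ) * ((a:ℂ) + j) := by
    exact_mod_cast congrArg (fun x : ℝ => (x : ℂ)) key
  ring_nf
  ring_nf at keyC
  linear_combination q ^ j * keyC


lemma tsum_bseq (a : ℝ) {q : ℂ} (hq : ‖q‖ < 1) :
    ∑' j : ℕ, (bseq a j : ℂ) * q ^ j = (1 - q) ^ ((-a : ℝ) : ℂ) := by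
  set F : ℂ → ℂ := fun z => ∑' j : ℕ, (bseq a j : ℂ) * z ^ j with hF
  set φ : ℂ → ℂ := fun z => F z * (1 - z) ^ ((a : ℝ) : ℂ) with hφ
  have hsub_ne : ∀ {x : ℂ}, ‖x‖ < 1 → (1 : ℂ) - x ≠ 0 := by
    intro x hx h
    have : x = 1 := by linear_combination -h
    rw [this] at hx; simp at hx
  have key : ∀ x ∈ Metric.ball (0:ℂ) 1, HasDerivAt φ 0 x := by
    intro x hx
    have hx1 : ‖x‖ < 1 := mem_ball_zero_iff.mp hx
    have h1x : (1:ℂ) - x ≠ 0 := hsub_ne hx1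
    have hslit : (1 : ℂ) - x ∈ slitPlane := by
      apply Or.inl
      have : x.re ≤ ‖x‖ := by
        calc x.re ≤ |x.re| := le_abs_self _
          _ ≤ ‖x‖ := Complex.abs_re_le_norm x
          _ = ‖x‖ := rfl
      simp only [sub_re, one_re]
      linarith
    have hbase : HasDerivAt (fun z : ℂ => 1 - z) (-1 : ℂ) x := by
      simpa using (hasDerivAt_id x).const_sub (1:ℂ)
    have hG : HasDerivAt (fun z : ℂ => (1 - z) ^ ((a : ℝ) : ℂ))
        (((a : ℝ) : ℂ) * (1 - x) ^ (((a : ℝ) : ℂ) - 1) * (-1)) x :=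
      HasDerivAt.cpow_const hbase hslit
    have hDF := hasDerivAt_Fb a hx1
    have hprod := hDF.mul hG
    have hcp : (1 - x) ^ ((a : ℝ) : ℂ) = (1 - x) ^ (((a : ℝ) : ℂ) - 1) * (1 - x) := by
      conv_lhs => rw [show ((a:ℝ):ℂ) = (((a:ℝ):ℂ) - 1) + 1 by ring]
      rw [Complex.cpow_add _ _ h1x, Complex.cpow_one]
    have hzero : (∑' j : ℕ, (bseq a j : ℂ) * ((j : ℂ) * x ^ (j - 1))) * (1 - x) ^ ((a : ℝ) : ℂ)
        + (∑' j : ℕ, (bseq a j : ℂ) * x ^ j) * (((a : ℝ) : ℂ) * (1 - x) ^ (((a : ℝ) : ℂ) - 1) * (-1)) = 0 := by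
      rw [hcp]
      have hkey := one_sub_mul_deriv a hx1
      linear_combination (1 - x) ^ (((a : ℝ) : ℂ) - 1) * hkey
    rw [hφ]
    exact hzero ▸ hprod
  have hconst : ∀ x ∈ Metric.ball (0:ℂ) 1, φ x = φ 0 := by
    intro x hx
    have hb : ∀ y ∈ Metric.ball (0:ℂ) 1,
        HasFDerivWithinAt φ (ContinuousLinearMap.smulRight (1 : ℂ →L[ℂ] ℂ) (0:ℂ))
          (Metric.ball (0:ℂ) 1) y := by
      intro y hy
      exact ((key y hy).hasFDerivAt).hasFDerivWithinAt
    have hnorm : ∀ y ∈ Metric.ball (0:ℂ) 1,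
        ‖ContinuousLinearMap.smulRight (1 : ℂ →L[ℂ] ℂ) (0:ℂ)‖ ≤ 0 := by
      intro y _
      have : (ContinuousLinearMap.smulRight (1 : ℂ →L[ℂ] ℂ) (0:ℂ)) = 0 := by
        ext z; simp
      rw [this, norm_zero]
    have h0mem : (0:ℂ) ∈ Metric.ball (0:ℂ) 1 := by simp
    have := Convex.norm_image_sub_le_of_norm_hasFDerivWithin_le hb hnorm
      (convex_ball (0:ℂ) 1) h0mem hx
    rw [zero_mul] at this
    have h := le_antisymm this (norm_nonneg _)
    rwa [norm_eq_zero, sub_eq_zero] at h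
  have hq1 : q ∈ Metric.ball (0:ℂ) 1 := mem_ball_zero_iff.mpr hq
  have hφ0 : φ 0 = 1 := by
    rw [hφ]
    have hF0 : F 0 = 1 := by
      have hterm : ∀ j : ℕ, j ≠ 0 → (bseq a j : ℂ) * (0:ℂ) ^ j = 0 := by
        intro j hj; rw [zero_pow hj, mul_zero]
      calc F 0 = ∑' j : ℕ, (bseq a j : ℂ) * (0:ℂ) ^ j := rfl
        _ = (bseq a 0 : ℂ) * (0:ℂ) ^ 0 := tsum_eq_single 0 hterm
        _ = 1 := by simp [bseq]
    simp [hF0]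
  have hφq := hconst q hq1
  rw [hφ0] at hφq
  have h1q : (1:ℂ) - q ≠ 0 := hsub_ne hq
  have hpow_ne : (1 - q) ^ ((a : ℝ) : ℂ) ≠ 0 := by
    intro h
    rcases (Complex.cpow_eq_zero_iff _ _).mp h with ⟨h1, _⟩
    exact h1q h1
  have hFq : F q = ((1 - q) ^ ((a : ℝ) : ℂ))⁻¹ := by
    apply eq_inv_of_mul_eq_one_left
    simp only [hφ] at hφq
    linear_combination hφq
  have : (∑' j : ℕ, (bseq a j : ℂ) * q ^ j) = ((1 - q) ^ ((a : ℝ) : ℂ))⁻¹ := hFq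
  rw [this, show ((-a : ℝ) : ℂ) = -((a:ℝ):ℂ) by push_cast; ring, Complex.cpow_neg]


/-- coefficients of the Euler-transformed series `F(γ-α, γ-1; γ; q)` -/
def eseq (A g : ℝ) : ℕ → ℝ
  | 0 => 1
  | k + 1 => eseq A g k * ((g - A + k) * (g - 1 + k)) / ((g + k) * (k + 1))

/-- Pochhammer ratio `(A)_n / (g)_n` -/
def cseq (A g : ℝ) : ℕ → ℝ
  | 0 => 1
  | n + 1 => cseq A g n * (A + n) / (g + n)

lemma local_id (A g : ℝ) (hg : 0 < g) (k j : ℕ) :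
    ((k : ℝ) + j + 1) * ((g + k + j) * eseq A g k * bseq (A - g + 1) (j + 1)
        - (A + k + j) * eseq A g k * bseq (A - g + 1) j)
      = ((k : ℝ) + 1) * (1 - g - ((k : ℝ) + 1)) * eseq A g (k + 1) * bseq (A - g + 1) j
        - (k : ℝ) * (1 - g - (k : ℝ)) * eseq A g k * bseq (A - g + 1) (j + 1) := by
  have hgk : (g + (k : ℝ)) ≠ 0 := by positivity
  have hk1 : ((k : ℝ) + 1) ≠ 0 := by positivity
  have hj1 : ((j : ℝ) + 1) ≠ 0 := by positivity
  show ((k : ℝ) + j + 1) * ((g + k + j) * eseq A g k * (bseq (A-g+1) j * ((A-g+1) + j) / (j + 1))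
        - (A + k + j) * eseq A g k * bseq (A - g + 1) j)
      = ((k : ℝ) + 1) * (1 - g - ((k : ℝ) + 1)) *
          (eseq A g k * ((g - A + k) * (g - 1 + k)) / ((g + k) * (k + 1))) * bseq (A - g + 1) j
        - (k : ℝ) * (1 - g - (k : ℝ)) * eseq A g k * (bseq (A-g+1) j * ((A-g+1) + j) / (j + 1))
  field_simp
  ring

lemma saalschutz (A g : ℝ) (hg : 0 < g) (n : ℕ) :
    ∑ k ∈ Finset.range (n + 1), eseq A g k * bseq (A - g + 1) (n - k) = cseq A g n := by
  induction n with
  | zero => simp [eseq, bseq, cseq]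
  | succ n ih =>
    set S := ∑ k ∈ Finset.range (n + 1), eseq A g k * bseq (A - g + 1) (n - k) with hS
    set G : ℕ → ℝ := fun k => (k : ℝ) * (1 - g - (k : ℝ)) * eseq A g k * bseq (A-g+1) (n + 1 - k)
      with hG
    have tele : ∑ k ∈ Finset.range (n + 1), (G (k + 1) - G k) = G (n + 1) - G 0 :=
      Finset.sum_range_sub G (n + 1)
    have per : ∀ k ∈ Finset.range (n + 1),
        ((n : ℝ) + 1) * ((g + n) * (eseq A g k * bseq (A-g+1) (n + 1 - k))
            - (A + n) * (eseq A g k * bseq (A-g+1) (n - k)))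
          = G (k + 1) - G k := by
      intro k hk
      have hkn : k ≤ n := Nat.lt_succ_iff.mp (Finset.mem_range.mp hk)
      set j := n - k with hj
      have hnk : n = k + j := by omega
      have h1 : n + 1 - k = j + 1 := by omega
      have h2 : n + 1 - (k + 1) = j := by omega
      have hcast : (n : ℝ) = (k : ℝ) + (j : ℝ) := by exact_mod_cast congrArg (Nat.cast : ℕ → ℝ) hnk
      have := local_id A g hg k j
      rw [hG]
      simp only [h1, h2]
      rw [hcast]
      push_cast
      push_cast at this
      linarith [this]
    have hsum : ∑ k ∈ Finset.range (n + 1),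
        ((n : ℝ) + 1) * ((g + n) * (eseq A g k * bseq (A-g+1) (n + 1 - k))
            - (A + n) * (eseq A g k * bseq (A-g+1) (n - k))) = G (n + 1) - G 0 := by
      rw [← tele]
      exact Finset.sum_congr rfl per
    set T' := ∑ k ∈ Finset.range (n + 1), eseq A g k * bseq (A-g+1) (n + 1 - k) with hT'
    have exp1 : ∑ k ∈ Finset.range (n + 1),
        ((n : ℝ) + 1) * ((g + n) * (eseq A g k * bseq (A-g+1) (n + 1 - k))
            - (A + n) * (eseq A g k * bseq (A-g+1) (n - k)))
        = ((n:ℝ) + 1) * ((g + n) * T' - (A + n) * S) := by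
      have hterm : ∀ k ∈ Finset.range (n+1), ((n : ℝ) + 1) * ((g + n) * (eseq A g k * bseq (A-g+1) (n + 1 - k))
            - (A + n) * (eseq A g k * bseq (A-g+1) (n - k)))
          = ((n:ℝ)+1) * (g+n) * (eseq A g k * bseq (A-g+1) (n + 1 - k))
            - ((n:ℝ)+1) * (A+n) * (eseq A g k * bseq (A-g+1) (n - k)) := fun k _ => by ring
      rw [Finset.sum_congr rfl hterm, Finset.sum_sub_distrib, ← Finset.mul_sum, ← Finset.mul_sum,
        ← hT', ← hS]
      ring
    have hG0 : G 0 = 0 := by simp [hG]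
    have hGn1 : G (n + 1) = ((n:ℝ) + 1) * (1 - g - ((n:ℝ) + 1)) * eseq A g (n + 1) := by
      have h0 : n + 1 - (n + 1) = 0 := Nat.sub_self (n + 1)
      simp only [hG, h0]
      rw [show bseq (A - g + 1) 0 = 1 from rfl, mul_one]
      push_cast
      ring
    have heq : ((n:ℝ) + 1) * ((g + n) * T' - (A + n) * S)
        = ((n:ℝ) + 1) * (1 - g - ((n:ℝ) + 1)) * eseq A g (n + 1) := by
      rw [← exp1, hsum, hG0, hGn1, sub_zero]
    have hn1 : ((n:ℝ) + 1) ≠ 0 := by positivity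
    have heq2 : (g + n) * T' - (A + n) * S = (1 - g - ((n:ℝ) + 1)) * eseq A g (n + 1) := by
      have := mul_left_cancel₀ hn1 (by rw [heq]; ring : ((n:ℝ)+1) * ((g + n) * T' - (A + n) * S)
        = ((n:ℝ)+1) * ((1 - g - ((n:ℝ) + 1)) * eseq A g (n + 1)))
      exact this
    -- T = T' + eseq (n+1)
    have hT : ∑ k ∈ Finset.range (n + 2), eseq A g k * bseq (A - g + 1) (n + 1 - k)
        = T' + eseq A g (n + 1) := by
      rw [Finset.sum_range_succ]
      rw [Nat.sub_self (n + 1)]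
      rw [show bseq (A - g + 1) 0 = 1 from rfl, mul_one]
    have hgn : (g + (n:ℝ)) ≠ 0 := by positivity
    have hfin : (g + n) * (T' + eseq A g (n + 1)) = (A + n) * S := by
      linear_combination heq2
    rw [hT]
    have hc : cseq A g (n + 1) = cseq A g n * (A + n) / (g + n) := rfl
    rw [hc, ← ih]
    rw [eq_div_iff hgn]
    linear_combination hfin


lemma summable_abs_eseq (A g : ℝ) (hg : 0 < g) (hA : g < A) :
    Summable (fun k => |eseq A g k|) := by
  set t := A - g with ht
  have ht0 : 0 < t := by rw [ht]; linarith
  set m := ⌈t⌉₊ + 1 with hm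
  have hmt : t ≤ (m : ℝ) := by
    calc t ≤ (⌈t⌉₊ : ℝ) := Nat.le_ceil t
      _ ≤ (m : ℝ) := by rw [hm]; push_cast; linarith
  have hm1 : 1 ≤ m := by omega
  set D := |eseq A g m| * Real.exp ((t+1) * Real.log (m+1)) with hD
  have hD0 : 0 ≤ D := mul_nonneg (abs_nonneg _) (Real.exp_nonneg _)
  have claim : ∀ i : ℕ, |eseq A g (m + i)|
      ≤ D * Real.exp (-(t+1) * Real.log (((m + i : ℕ) : ℝ) + 1)) := by
    intro i
    induction i with
    | zero =>
      have heq : D * Real.exp (-(t+1) * Real.log (((m : ℕ):ℝ) + 1)) = |eseq A g m| := by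
        rw [hD, mul_assoc, ← Real.exp_add]
        rw [show (t+1) * Real.log ((m:ℝ)+1) + -(t+1) * Real.log (((m:ℕ):ℝ) + 1) = 0 by push_cast; ring]
        rw [Real.exp_zero, mul_one]
      rw [Nat.add_zero]
      exact le_of_eq heq.symm
    | succ i ih =>
      set k := m + i with hk
      have hk1 : 1 ≤ k := by omega
      have hkt : t ≤ (k : ℝ) := by
        calc t ≤ (m:ℝ) := hmt
          _ ≤ (k:ℝ) := by exact_mod_cast Nat.le_add_right m i
      have hkR : (1:ℝ) ≤ (k:ℝ) := by exact_mod_cast hk1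
      have habs : |eseq A g (k+1)|
          = |eseq A g k| * ((((k:ℝ) - t) * (g - 1 + k)) / ((g + k) * ((k:ℝ) + 1))) := by
        rw [show eseq A g (k+1) = eseq A g k * ((g - A + k) * (g - 1 + k)) / ((g + k) * (k + 1)) from rfl]
        rw [abs_div, abs_mul, abs_mul]
        rw [_root_.abs_of_nonneg (by linarith : (0:ℝ) ≤ g - A + (k:ℝ))]
        rw [_root_.abs_of_nonneg (by linarith : (0:ℝ) ≤ g - 1 + (k:ℝ))]
        rw [_root_.abs_of_pos (by positivity : (0:ℝ) < (g + (k:ℝ)) * ((k:ℝ) + 1))]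
        rw [show g - A + (k:ℝ) = (k:ℝ) - t by rw [ht]; ring]
        rw [mul_div_assoc]
      have hfactor : (((k:ℝ) - t) * (g - 1 + k)) / ((g + k) * ((k:ℝ) + 1))
          ≤ Real.exp (-(t+1) / ((k:ℝ)+1)) := by
        have h1 : (((k:ℝ) - t) * (g - 1 + k)) / ((g + k) * ((k:ℝ) + 1))
            ≤ ((k:ℝ) - t) / ((k:ℝ) + 1) := by
          rw [div_le_div_iff₀ (by positivity) (by positivity)]
          nlinarith [sub_nonneg.mpr hkt]
        have h2 : ((k:ℝ) - t) / ((k:ℝ) + 1) = 1 - (t+1)/((k:ℝ)+1) := by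
          field_simp
          ring
        have h3 : 1 - (t+1)/((k:ℝ)+1) ≤ Real.exp (-((t+1)/((k:ℝ)+1))) := by
          have := Real.add_one_le_exp (-((t+1)/((k:ℝ)+1)))
          linarith
        calc (((k:ℝ) - t) * (g - 1 + k)) / ((g + k) * ((k:ℝ) + 1)) ≤ ((k:ℝ) - t) / ((k:ℝ) + 1) := h1
          _ = 1 - (t+1)/((k:ℝ)+1) := h2
          _ ≤ Real.exp (-((t+1)/((k:ℝ)+1))) := h3
          _ = Real.exp (-(t+1) / ((k:ℝ)+1)) := by rw [neg_div]
      have hlog : Real.log ((k:ℝ)+2) ≤ Real.log ((k:ℝ)+1) + 1/((k:ℝ)+1) := by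
        have hpos : (0:ℝ) < ((k:ℝ)+2)/((k:ℝ)+1) := by positivity
        have hsub := Real.log_le_sub_one_of_pos hpos
        rw [Real.log_div (by positivity) (by positivity)] at hsub
        have harith : ((k:ℝ)+2)/((k:ℝ)+1) - 1 = 1/((k:ℝ)+1) := by field_simp; norm_num
        linarith
      have hfnonneg : (0:ℝ) ≤ (((k:ℝ) - t) * (g - 1 + k)) / ((g + k) * ((k:ℝ) + 1)) :=
        div_nonneg (mul_nonneg (by linarith) (by linarith)) (by positivity)
      calc |eseq A g (k+1)|
          = |eseq A g k| * ((((k:ℝ) - t) * (g - 1 + k)) / ((g + k) * ((k:ℝ) + 1))) := habs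
        _ ≤ (D * Real.exp (-(t+1) * Real.log (((k:ℕ):ℝ)+1))) * Real.exp (-(t+1) / ((k:ℝ)+1)) :=
            mul_le_mul ih hfactor hfnonneg (by positivity)
        _ = D * Real.exp (-(t+1) * Real.log (((k:ℕ):ℝ)+1) + -(t+1) / ((k:ℝ)+1)) := by
            rw [mul_assoc, ← Real.exp_add]
        _ ≤ D * Real.exp (-(t+1) * Real.log ((((k+1:ℕ)):ℝ) + 1)) := by
            apply mul_le_mul_of_nonneg_left _ hD0
            apply Real.exp_le_exp.mpr
            push_cast
            rw [show ((k:ℝ)+1+1) = (k:ℝ)+2 by ring]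
            have hint := mul_le_mul_of_nonneg_left hlog (by linarith : (0:ℝ) ≤ t+1)
            have hd : (t+1)*(Real.log ((k:ℝ)+1) + 1/((k:ℝ)+1))
                = (t+1)*Real.log ((k:ℝ)+1) + (t+1)/((k:ℝ)+1) := by ring
            rw [neg_mul, neg_mul, neg_div, ← neg_add]
            exact neg_le_neg (by linarith)
  have hf : ∀ n : ℕ, Real.exp (-(t+1) * Real.log ((n:ℝ)+1)) = 1/((n:ℝ)+1)^(t+1) := by
    intro n
    rw [Real.rpow_def_of_pos (by positivity), one_div, ← Real.exp_neg]
    congr 1; ring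
  have hsum0 : Summable (fun n : ℕ => 1/((n:ℝ)+1)^(t+1)) := by
    have h := Real.summable_one_div_nat_rpow.mpr (by linarith : (1:ℝ) < t+1)
    have h2 := (summable_nat_add_iff 1).mpr h
    apply h2.congr
    intro n
    push_cast
    ring_nf
  have hsumexp : Summable (fun n : ℕ => Real.exp (-(t+1) * Real.log ((n:ℝ)+1))) :=
    hsum0.congr (fun n => (hf n).symm)
  have hsum1 : Summable (fun i : ℕ => D * Real.exp (-(t+1) * Real.log (((m + i : ℕ):ℝ) + 1))) := by
    apply Summable.mul_left
    have h3 := (summable_nat_add_iff m).mpr hsumexp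
    apply h3.congr
    intro i
    rw [Nat.add_comm i m]
  have hS : Summable (fun i : ℕ => |eseq A g (m + i)|) :=
    Summable.of_nonneg_of_le (fun i => abs_nonneg _) claim hsum1
  have h2 : Summable (fun i : ℕ => |eseq A g (i + m)|) :=
    hS.congr (fun i => by rw [Nat.add_comm])
  exact (summable_nat_add_iff m).mp h2


lemma cseq_gamma (A g : ℝ) (hA : 0 < A) (hg : 0 < g) (k : ℕ) :
    Real.Gamma ((k:ℝ) + A) = cseq A g k * (Real.Gamma A / Real.Gamma g) * Real.Gamma ((k:ℝ) + g) := by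
  induction k with
  | zero =>
    have hΓg : Real.Gamma g ≠ 0 := (Real.Gamma_pos_of_pos hg).ne'
    simp [cseq]
    field_simp
  | succ k ih =>
    have h1 : ((k+1:ℕ):ℝ) + A = ((k:ℝ) + A) + 1 := by push_cast; ring
    have h2 : ((k+1:ℕ):ℝ) + g = ((k:ℝ) + g) + 1 := by push_cast; ring
    have hkA : ((k:ℝ) + A) ≠ 0 := by positivity
    have hkg : ((k:ℝ) + g) ≠ 0 := by positivity
    rw [h1, h2, Real.Gamma_add_one hkA, Real.Gamma_add_one hkg, ih]
    rw [show cseq A g (k+1) = cseq A g k * (A + k) / (g + k) from rfl]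
    have hgk : (g + (k:ℝ)) ≠ 0 := by positivity
    field_simp
    ring

lemma hyperF_eval (A g : ℝ) (hA : 0 < A) (hg : 0 < g) (q : ℂ) :
    hyperF (A:ℂ) 1 (g:ℂ) q = ∑' k : ℕ, (cseq A g k : ℂ) * q ^ k := by
  have hΓA : Real.Gamma A ≠ 0 := (Real.Gamma_pos_of_pos hA).ne'
  have hΓg : Real.Gamma g ≠ 0 := (Real.Gamma_pos_of_pos hg).ne'
  have hterm : ∀ k : ℕ, Complex.Gamma ((k:ℂ) + (A:ℂ)) * Complex.Gamma ((k:ℂ) + 1) /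
      (Complex.Gamma ((k:ℂ) + (g:ℂ)) * ((k.factorial : ℕ) : ℂ)) * q ^ k
      = ((Real.Gamma A / Real.Gamma g : ℝ) : ℂ) * ((cseq A g k : ℂ) * q ^ k) := by
    intro k
    rw [show (k:ℂ) + (A:ℂ) = (((k:ℝ) + A : ℝ):ℂ) by push_cast; ring, Complex.Gamma_ofReal]
    rw [show (k:ℂ) + (g:ℂ) = (((k:ℝ) + g : ℝ):ℂ) by push_cast; ring, Complex.Gamma_ofReal]
    rw [Complex.Gamma_nat_eq_factorial]
    rw [cseq_gamma A g hA hg k]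
    have hΓkg : Real.Gamma ((k:ℝ) + g) ≠ 0 := (Real.Gamma_pos_of_pos (by positivity)).ne'
    have hkf : ((k.factorial : ℕ) : ℂ) ≠ 0 := Nat.cast_ne_zero.mpr k.factorial_ne_zero
    push_cast
    rw [div_mul_eq_mul_div, div_mul_eq_mul_div]
    rw [div_eq_div_iff (by
      apply mul_ne_zero
      · exact_mod_cast Complex.ofReal_ne_zero.mpr hΓkg
      · exact hkf) (Complex.ofReal_ne_zero.mpr hΓg)]
    have hcg : ((Real.Gamma g : ℝ):ℂ) ≠ 0 := Complex.ofReal_ne_zero.mpr hΓg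
    push_cast
    field_simp
  rw [hyperF]
  rw [tsum_congr hterm, tsum_mul_left]
  rw [Complex.Gamma_one, Complex.Gamma_ofReal, Complex.Gamma_ofReal]
  rw [mul_one]
  rw [← mul_assoc]
  have hcg : ((Real.Gamma g : ℝ):ℂ) ≠ 0 := Complex.ofReal_ne_zero.mpr hΓg
  have hca : ((Real.Gamma A : ℝ):ℂ) ≠ 0 := Complex.ofReal_ne_zero.mpr hΓA
  rw [show ((Real.Gamma g : ℝ):ℂ) / ((Real.Gamma A : ℝ):ℂ) * ((Real.Gamma A / Real.Gamma g : ℝ) : ℂ) = 1 by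
    push_cast
    rw [div_mul_div_comm, mul_comm]
    exact div_self (mul_ne_zero hca hcg)]
  rw [one_mul]

lemma summable_eseq_norm (A g : ℝ) (hg : 0 < g) (hA : g < A) {q : ℂ} (hq : ‖q‖ < 1) :
    Summable (fun k => ‖(eseq A g k : ℂ) * q ^ k‖) := by
  refine Summable.of_nonneg_of_le (fun k => norm_nonneg _) (fun k => ?_)
    (summable_abs_eseq A g hg hA)
  rw [norm_mul, norm_pow, Complex.norm_real, Real.norm_eq_abs]
  calc |eseq A g k| * ‖q‖ ^ k ≤ |eseq A g k| * 1 := by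
        apply mul_le_mul_of_nonneg_left _ (abs_nonneg _)
        exact pow_le_one₀ (norm_nonneg q) hq.le
    _ = |eseq A g k| := mul_one _

lemma tsum_cseq_eq (A g : ℝ) (hg : 0 < g) (hA : g < A) {q : ℂ} (hq : ‖q‖ < 1) :
    ∑' n : ℕ, (cseq A g n : ℂ) * q ^ n
      = (∑' k : ℕ, (eseq A g k : ℂ) * q ^ k) * (1 - q) ^ ((-(A - g + 1) : ℝ) : ℂ) := by
  rw [← tsum_bseq (A - g + 1) hq]
  rw [tsum_mul_tsum_eq_tsum_sum_antidiagonal_of_summable_norm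
    (summable_eseq_norm A g hg hA hq) (summable_bseq_norm (A - g + 1) hq)]
  apply tsum_congr
  intro n
  rw [Finset.Nat.sum_antidiagonal_eq_sum_range_succ_mk]
  have hterm : ∀ k ∈ Finset.range (n+1),
      (eseq A g k : ℂ) * q ^ k * ((bseq (A - g + 1) (n - k) : ℂ) * q ^ (n - k))
      = ((eseq A g k * bseq (A - g + 1) (n - k) : ℝ) : ℂ) * q ^ n := by
    intro k hk
    have hkn : k ≤ n := Nat.lt_succ_iff.mp (Finset.mem_range.mp hk)
    have hpow : q ^ k * q ^ (n - k) = q ^ n := by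
      rw [← pow_add, Nat.add_sub_cancel' hkn]
    push_cast
    calc (eseq A g k : ℂ) * q ^ k * ((bseq (A - g + 1) (n - k) : ℂ) * q ^ (n - k))
        = (eseq A g k : ℂ) * (bseq (A - g + 1) (n - k) : ℂ) * (q ^ k * q ^ (n - k)) := by ring
      _ = (eseq A g k : ℂ) * (bseq (A - g + 1) (n - k) : ℂ) * q ^ n := by rw [hpow]
  rw [Finset.sum_congr rfl hterm, ← Finset.sum_mul]
  congr 1
  rw [← Complex.ofReal_sum]
  rw [saalschutz A g hg n]

lemma hyperF_bound (A g : ℝ) (hA0 : 0 < A) (hg : 0 < g) (hgA : g < A) :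
    ∃ E : ℝ, 0 < E ∧ ∀ q : ℂ, ‖q‖ < 1 →
      ‖hyperF (A:ℂ) 1 (g:ℂ) q‖ ≤ E * ‖1 - q‖ ^ (-(A - g + 1)) := by
  have hsum := summable_abs_eseq A g hg hgA
  have htsum0 : 0 ≤ ∑' k, |eseq A g k| := tsum_nonneg (fun k => abs_nonneg _)
  refine ⟨(∑' k, |eseq A g k|) + 1, by linarith, ?_⟩
  intro q hq
  rw [hyperF_eval A g hA0 hg q, tsum_cseq_eq A g hg hgA hq, norm_mul]
  have h1q : (1:ℂ) - q ≠ 0 := by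
    intro h
    have : q = 1 := by linear_combination -h
    rw [this] at hq
    simp at hq
  have habs2 : ‖(1 - q) ^ ((-(A - g + 1) : ℝ) : ℂ)‖
      = ‖1 - q‖ ^ (-(A - g + 1)) := by
    rw [Complex.norm_cpow_of_ne_zero h1q]
    simp
  rw [habs2]
  apply mul_le_mul_of_nonneg_right _ (Real.rpow_nonneg (norm_nonneg _) _)
  calc ‖∑' k : ℕ, (eseq A g k : ℂ) * q ^ k‖
      ≤ ∑' k : ℕ, ‖(eseq A g k : ℂ) * q ^ k‖ :=
        norm_tsum_le_tsum_norm (summable_eseq_norm A g hg hgA hq)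
    _ ≤ ∑' k : ℕ, |eseq A g k| := by
        apply Summable.tsum_le_tsum _ (summable_eseq_norm A g hg hgA hq) hsum
        intro k
        rw [norm_mul, norm_pow, Complex.norm_real, Real.norm_eq_abs]
        calc |eseq A g k| * ‖q‖ ^ k ≤ |eseq A g k| * 1 :=
              mul_le_mul_of_nonneg_left (pow_le_one₀ (norm_nonneg q) hq.le) (abs_nonneg _)
          _ = |eseq A g k| := mul_one _
    _ ≤ (∑' k, |eseq A g k|) + 1 := by linarith


end St11

/-- for `ν > −1` there is `c_ν > 0` such that for all `z, w ∈ ℍ`,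
`|K_ν(z,w)| ≤ c_ν |z₂w̄₂|^{−1−⌈ν/2⌉} |1 − z₁w̄₁/(z₂w̄₂)|^{−(ν+2)} |1 − z₂w̄₂|^{−(ν+2)}`. -/
theorem statement11 (ν : ℝ) (hν : -1 < ν) :
    ∃ c : ℝ, 0 < c ∧ ∀ z ∈ Hartogs, ∀ w ∈ Hartogs,
      ‖KNu ν z w‖ ≤
        c * ‖z.2 * (starRingEnd ℂ) w.2‖ ^ (-1 - ⌈ν / 2⌉ : ℤ) *
          ‖1 - z.1 * (starRingEnd ℂ) w.1 / (z.2 * (starRingEnd ℂ) w.2)‖ ^ (-(ν + 2)) *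
          ‖1 - z.2 * (starRingEnd ℂ) w.2‖ ^ (-(ν + 2)) := by
  set A : ℝ := 3 / 2 * ν - (⌈ν / 2⌉ : ℝ) + 2 with hAdef
  set g : ℝ := ν / 2 - (⌈ν / 2⌉ : ℝ) + 1 with hgdef
  have hceil1 : (⌈ν / 2⌉ : ℝ) < ν / 2 + 1 := Int.ceil_lt_add_one (ν / 2)
  have hceil2 : ν / 2 ≤ (⌈ν / 2⌉ : ℝ) := Int.le_ceil (ν / 2)
  have hg0 : 0 < g := by rw [hgdef]; linarith
  have hgA : g < A := by rw [hgdef, hAdef]; linarith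
  have hA0 : 0 < A := by linarith
  have hAg1 : A - g + 1 = ν + 2 := by rw [hAdef, hgdef]; ring
  obtain ⟨E, hE0, hE⟩ := St11.hyperF_bound A g hA0 hg0 hgA
  refine ⟨|aNu ν| * E + 1, by positivity, ?_⟩
  intro z hz w hw
  obtain ⟨hz1, hz2⟩ := hz
  obtain ⟨hw1, hw2⟩ := hw
  set q : ℂ := z.2 * (starRingEnd ℂ) w.2 with hqdef
  set p : ℂ := z.1 * (starRingEnd ℂ) w.1 / (z.2 * (starRingEnd ℂ) w.2) with hpdef
  have habsq : ‖q‖ = ‖z.2‖ * ‖w.2‖ := by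
    rw [hqdef, norm_mul, Complex.norm_conj]
  have hq1 : ‖q‖ < 1 := by
    rw [habsq]
    calc ‖z.2‖ * ‖w.2‖ < 1 * 1 :=
        mul_lt_mul'' hz2 hw2 (norm_nonneg _) (norm_nonneg _)
      _ = 1 := mul_one 1
  have hqnorm : ‖q‖ < 1 := by exact hq1
  have hz2ne : ‖z.2‖ ≠ 0 := by
    have : 0 < ‖z.2‖ := lt_of_le_of_lt (norm_nonneg _) hz1
    exact this.ne'
  have hw2ne : ‖w.2‖ ≠ 0 := by
    have : 0 < ‖w.2‖ := lt_of_le_of_lt (norm_nonneg _) hw1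
    exact this.ne'
  have habsp : ‖p‖ < 1 := by
    rw [hpdef, norm_div, norm_mul, norm_mul, Complex.norm_conj, Complex.norm_conj]
    rw [div_lt_one (by positivity)]
    exact mul_lt_mul'' hz1 hw1 (norm_nonneg _) (norm_nonneg _)
  have h1p : (1:ℂ) - p ≠ 0 := by
    intro h
    have hp1 : p = 1 := by linear_combination -h
    rw [hp1] at habsp
    simp at habsp
  -- expand the norm of KNu
  have hnorm : ‖KNu ν z w‖ = |aNu ν| * ‖q‖ ^ (-1 - ⌈ν / 2⌉ : ℤ)
      * ‖1 - p‖ ^ (-(ν + 2))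
      * ‖hyperF ((A : ℝ) : ℂ) 1 ((g : ℝ) : ℂ) q‖ := by
    rw [KNu]
    rw [norm_mul, norm_mul, norm_mul]
    congr 1
    · congr 1
      · congr 1
        · rw [Complex.norm_real, Real.norm_eq_abs]
        · exact norm_zpow _ _
      · rw [Complex.norm_cpow_of_ne_zero h1p]
        simp
  rw [hnorm]
  have hhf := hE q hqnorm
  rw [hAg1] at hhf
  calc |aNu ν| * ‖q‖ ^ (-1 - ⌈ν / 2⌉ : ℤ) * ‖1 - p‖ ^ (-(ν + 2))
        * ‖hyperF ((A : ℝ) : ℂ) 1 ((g : ℝ) : ℂ) q‖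
      ≤ |aNu ν| * ‖q‖ ^ (-1 - ⌈ν / 2⌉ : ℤ) * ‖1 - p‖ ^ (-(ν + 2))
        * (E * ‖1 - q‖ ^ (-(ν + 2))) := by
        apply mul_le_mul_of_nonneg_left hhf
        have h1 : (0:ℝ) ≤ ‖q‖ ^ (-1 - ⌈ν / 2⌉ : ℤ) := zpow_nonneg (norm_nonneg _) _
        have h2 : (0:ℝ) ≤ ‖1 - p‖ ^ (-(ν + 2)) := Real.rpow_nonneg (norm_nonneg _) _
        positivity
    _ = (|aNu ν| * E) * ‖q‖ ^ (-1 - ⌈ν / 2⌉ : ℤ) * ‖1 - p‖ ^ (-(ν + 2))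
        * ‖1 - q‖ ^ (-(ν + 2)) := by ring
    _ ≤ (|aNu ν| * E + 1) * ‖q‖ ^ (-1 - ⌈ν / 2⌉ : ℤ) * ‖1 - p‖ ^ (-(ν + 2))
        * ‖1 - q‖ ^ (-(ν + 2)) := by
        have h1 : (0:ℝ) ≤ ‖q‖ ^ (-1 - ⌈ν / 2⌉ : ℤ) := zpow_nonneg (norm_nonneg _) _
        have h2 : (0:ℝ) ≤ ‖1 - p‖ ^ (-(ν + 2)) := Real.rpow_nonneg (norm_nonneg _) _
        have h3 : (0:ℝ) ≤ ‖1 - q‖ ^ (-(ν + 2)) := Real.rpow_nonneg (norm_nonneg _) _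
        have h4 : |aNu ν| * E ≤ |aNu ν| * E + 1 := by linarith
        apply mul_le_mul_of_nonneg_right _ h3
        apply mul_le_mul_of_nonneg_right _ h2
        apply mul_le_mul_of_nonneg_right h4 h1
end
end

section
/- Let Φ : 𝔻 × 𝔻* → ℍ be the biholomorphism Φ(w₁,w₂) = (w₁w₂, w₂), with complex Jacobian determinant Φ'(w₁,w₂) = w₂. The map f ↦ Φ'·(f∘Φ) is a surjective isometry from H²(ℍ) onto H²(𝔻×𝔻): if f(z₁,z₂) = Σ_{j≥0} Σ_{k≥−j−1} a_{jk} z₁^j z₂^k ∈ H²(ℍ), then Φ'·(f∘Φ) (which has only nonnegative powers of w₂ and hence extends holomorphically to 𝔻×𝔻) satisfies ‖Φ'·(f∘Φ)‖²_{H²(𝔻×𝔻)} = ‖f‖²_{H²(ℍ)}, and every g ∈ H²(𝔻×𝔻) arises in this way. -/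
open MeasureTheory Real Complex Set Filter
open scoped ENNReal

noncomputable section

/-- the index embedding -/
def eIdx (jk : ℕ × ℕ) : ℕ × ℤ := (jk.1, (jk.2 : ℤ) - jk.1 - 1)

lemma eIdx_inj : Function.Injective eIdx := by
  rintro ⟨j, k⟩ ⟨j', k'⟩ h
  simp only [eIdx, Prod.mk.injEq] at h ⊢
  omega

lemma mem_range_eIdx {jk : ℕ × ℤ} : jk ∈ Set.range eIdx ↔ -(jk.1 : ℤ) - 1 ≤ jk.2 := by
  constructor
  · rintro ⟨⟨j, k⟩, rfl⟩; simp [eIdx]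
  · intro h
    refine ⟨(jk.1, (jk.2 + jk.1 + 1).toNat), ?_⟩
    simp only [eIdx]
    have : ((jk.2 + jk.1 + 1).toNat : ℤ) = jk.2 + jk.1 + 1 := by omega
    rw [this]
    ext <;> simp <;> omega

lemma isOpen_diskProd : IsOpen diskProd := by
  have h1 : IsOpen {w : ℂ × ℂ | ‖w.1‖ < 1} :=
    isOpen_lt (continuous_norm.comp continuous_fst) continuous_const
  have h2 : IsOpen {w : ℂ × ℂ | ‖w.2‖ < 1} :=
    isOpen_lt (continuous_norm.comp continuous_snd) continuous_const
  exact h1.inter h2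

lemma aux_summable_geom {r₁ r₂ C : ℝ} (h1 : 0 ≤ r₁) (h1' : r₁ < 1)
    (h2 : 0 ≤ r₂) (h2' : r₂ < 1) :
    Summable (fun jk : ℕ × ℕ => C * (r₁ ^ jk.1 * r₂ ^ jk.2)) := by
  exact ((summable_geometric_of_lt_one h1 h1').mul_of_nonneg
    (summable_geometric_of_lt_one h2 h2') (fun n => pow_nonneg h1 n)
    (fun n => pow_nonneg h2 n)).mul_left C

lemma aux_summable_at {c : ℕ × ℕ → ℂ} {C : ℝ} (hc : ∀ jk, ‖c jk‖ ≤ C) {w : ℂ × ℂ}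
    (hw : w ∈ diskProd) :
    Summable (fun jk : ℕ × ℕ => c jk * w.1 ^ jk.1 * w.2 ^ jk.2) := by
  apply Summable.of_norm_bounded (aux_summable_geom (C := C) (norm_nonneg w.1)
    hw.1 (norm_nonneg w.2) hw.2)
  intro jk
  rw [norm_mul, norm_mul, norm_pow, norm_pow]
  calc ‖c jk‖ * ‖w.1‖ ^ jk.1 * ‖w.2‖ ^ jk.2
      = ‖c jk‖ * (‖w.1‖ ^ jk.1 * ‖w.2‖ ^ jk.2) := by ring
    _ ≤ C * (‖w.1‖ ^ jk.1 * ‖w.2‖ ^ jk.2) :=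
        mul_le_mul_of_nonneg_right (hc jk) (by positivity)

/-- derivative of the monomial `w ↦ c w₁^j w₂^k` -/
def mder (c : ℂ) (j k : ℕ) (w : ℂ × ℂ) : (ℂ × ℂ) →L[ℂ] ℂ :=
  (c * w.1 ^ j) • (((k : ℂ) * w.2 ^ (k - 1)) • ContinuousLinearMap.snd ℂ ℂ ℂ) +
    (w.2 ^ k) • (c • (((j : ℂ) * w.1 ^ (j - 1)) • ContinuousLinearMap.fst ℂ ℂ ℂ))

lemma hasFDerivAt_monomial (c : ℂ) (j k : ℕ) (w : ℂ × ℂ) :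
    HasFDerivAt (fun w : ℂ × ℂ => c * w.1 ^ j * w.2 ^ k) (mder c j k w) w := by
  have h1 : HasFDerivAt (fun w : ℂ × ℂ => w.1 ^ j)
      (((j : ℂ) * w.1 ^ (j - 1)) • ContinuousLinearMap.fst ℂ ℂ ℂ) w :=
    (hasDerivAt_pow j w.1).comp_hasFDerivAt w hasFDerivAt_fst
  have h2 : HasFDerivAt (fun w : ℂ × ℂ => w.2 ^ k)
      (((k : ℂ) * w.2 ^ (k - 1)) • ContinuousLinearMap.snd ℂ ℂ ℂ) w :=
    (hasDerivAt_pow k w.2).comp_hasFDerivAt w hasFDerivAt_snd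
  exact (h1.const_mul c).mul h2

lemma pow_deriv_bound {t : ℝ} (ht : 1 / 2 ≤ t) (ht1 : t ≤ 1) {z : ℂ}
    (hz : ‖z‖ ≤ t ^ 2) (k : ℕ) :
    ‖(k : ℂ) * z ^ (k - 1)‖ ≤ 4 * ((k : ℝ) * t ^ k) * t ^ k := by
  have ht0 : (0:ℝ) < t := lt_of_lt_of_le (by norm_num) ht
  rcases k with _ | k
  · simp
  · rw [norm_mul, norm_pow]
    simp only [Nat.add_sub_cancel]
    have h1 : ‖((k + 1 : ℕ) : ℂ)‖ = ((k + 1 : ℕ) : ℝ) := Complex.norm_natCast _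
    have h2 : ‖z‖ ^ k ≤ (t ^ 2) ^ k := pow_le_pow_left₀ (norm_nonneg z) hz k
    have h3 : (t ^ 2) ^ k ≤ 4 * (t ^ (k + 1) * t ^ (k + 1)) := by
      have : (t^2)^k = t^k * t^k := by ring
      rw [this]
      have h4 : t ^ k = t ^ (k+1) / t := by field_simp; ring
      rw [h4]
      rw [div_mul_div_comm]
      rw [div_le_iff₀ (by positivity)]
      have h5 : 1 ≤ 4 * (t * t) := by nlinarith
      nlinarith [pow_nonneg ht0.le (k+1), mul_nonneg (pow_nonneg ht0.le (k+1)) (pow_nonneg ht0.le (k+1))]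
    calc ‖((k + 1 : ℕ) : ℂ)‖ * ‖z‖ ^ k
          ≤ ((k + 1 : ℕ) : ℝ) * (4 * (t ^ (k+1) * t ^ (k+1))) := by
          rw [h1]; exact mul_le_mul_of_nonneg_left (h2.trans h3) (by positivity)
      _ = 4 * (((k + 1 : ℕ) : ℝ) * t ^ (k+1)) * t ^ (k+1) := by push_cast; ring

lemma mder_norm_bound {c : ℂ} {C : ℝ} (hc : ‖c‖ ≤ C) {t : ℝ} (ht : 1 / 2 ≤ t) (ht1 : t ≤ 1)
    {w : ℂ × ℂ} (hw1 : ‖w.1‖ ≤ t ^ 2) (hw2 : ‖w.2‖ ≤ t ^ 2) {M : ℝ}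
    (hM : ∀ n : ℕ, (n : ℝ) * t ^ n ≤ M) (j k : ℕ) :
    ‖mder c j k w‖ ≤ 8 * C * M * (t ^ j * t ^ k) := by
  have ht0 : (0:ℝ) < t := lt_of_lt_of_le (by norm_num) ht
  have hC : 0 ≤ C := le_trans (norm_nonneg _) hc
  have hM0 : 0 ≤ M := le_trans (by simp) (hM 0)
  have hwj : ‖w.1 ^ j‖ ≤ (t ^ 2) ^ j := by
    rw [norm_pow]; exact pow_le_pow_left₀ (norm_nonneg _) hw1 j
  have hwk : ‖w.2 ^ k‖ ≤ (t ^ 2) ^ k := by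
    rw [norm_pow]; exact pow_le_pow_left₀ (norm_nonneg _) hw2 k
  have key : C * (t ^ 2) ^ j * (4 * ((k : ℝ) * t ^ k) * t ^ k)
      + (t ^ 2) ^ k * (C * (4 * ((j : ℝ) * t ^ j) * t ^ j))
      ≤ 8 * C * M * (t ^ j * t ^ k) := by
    have e1 : (t^2)^j = t^j * t^j := by ring
    have e2 : (t^2)^k = t^k * t^k := by ring
    rw [e1, e2]
    have hjk := hM (j + k)
    push_cast at hjk
    have hpk : (0:ℝ) ≤ t ^ k := by positivity
    have hpj : (0:ℝ) ≤ t ^ j := by positivity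
    have ej : (j:ℝ) * t^(j+k) ≤ M := by
      nlinarith [mul_nonneg (Nat.cast_nonneg (α := ℝ) k) (pow_nonneg ht0.le (j+k))]
    have ek : (k:ℝ) * t^(j+k) ≤ M := by
      nlinarith [mul_nonneg (Nat.cast_nonneg (α := ℝ) j) (pow_nonneg ht0.le (j+k))]
    have hpow : t ^ (j+k) = t^j * t^k := pow_add t j k
    rw [hpow] at ej ek
    nlinarith [mul_nonneg hpj hpk, mul_nonneg (mul_nonneg hpj hpk) hC,
      mul_nonneg (Nat.cast_nonneg (α := ℝ) j) hpj, mul_nonneg (Nat.cast_nonneg (α := ℝ) k) hpk]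
  apply ContinuousLinearMap.opNorm_le_bound _ (by positivity)
  intro x
  have happ : mder c j k w x =
      (c * w.1 ^ j) * (((k : ℂ) * w.2 ^ (k - 1)) * x.2)
        + (w.2 ^ k) * (c * (((j : ℂ) * w.1 ^ (j - 1)) * x.1)) := by
    simp [mder, mul_assoc]
  rw [happ]
  have b1 : ‖(c * w.1 ^ j) * (((k : ℂ) * w.2 ^ (k - 1)) * x.2)‖
      ≤ C * (t ^ 2) ^ j * (4 * ((k : ℝ) * t ^ k) * t ^ k) * ‖x‖ := by
    have e1 : ‖c‖ * ‖w.1 ^ j‖ ≤ C * (t^2)^j := mul_le_mul hc hwj (norm_nonneg _) hC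
    have e2 : ‖(k : ℂ) * w.2 ^ (k - 1)‖ ≤ 4 * ((k : ℝ) * t ^ k) * t ^ k :=
      pow_deriv_bound ht ht1 hw2 k
    have e3 : ‖x.2‖ ≤ ‖x‖ := norm_snd_le x
    calc ‖(c * w.1 ^ j) * (((k : ℂ) * w.2 ^ (k - 1)) * x.2)‖
        = (‖c‖ * ‖w.1 ^ j‖) * (‖(k : ℂ) * w.2 ^ (k - 1)‖ * ‖x.2‖) := by
          simp only [norm_mul]; try ring
      _ ≤ (C * (t^2)^j) * ((4 * ((k : ℝ) * t ^ k) * t ^ k) * ‖x‖) := by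
          apply mul_le_mul e1 (mul_le_mul e2 e3 (norm_nonneg _) (by positivity))
            (by positivity) (by positivity)
      _ = C * (t ^ 2) ^ j * (4 * ((k : ℝ) * t ^ k) * t ^ k) * ‖x‖ := by ring
  have b2 : ‖(w.2 ^ k) * (c * (((j : ℂ) * w.1 ^ (j - 1)) * x.1))‖
      ≤ (t ^ 2) ^ k * (C * (4 * ((j : ℝ) * t ^ j) * t ^ j)) * ‖x‖ := by
    have e2 : ‖(j : ℂ) * w.1 ^ (j - 1)‖ ≤ 4 * ((j : ℝ) * t ^ j) * t ^ j :=
      pow_deriv_bound ht ht1 hw1 j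
    have e3 : ‖x.1‖ ≤ ‖x‖ := norm_fst_le x
    calc ‖(w.2 ^ k) * (c * (((j : ℂ) * w.1 ^ (j - 1)) * x.1))‖
        = ‖w.2 ^ k‖ * (‖c‖ * (‖(j : ℂ) * w.1 ^ (j - 1)‖ * ‖x.1‖)) := by
          simp only [norm_mul]; try ring
      _ ≤ (t^2)^k * (C * ((4 * ((j : ℝ) * t ^ j) * t ^ j) * ‖x‖)) := by
          apply mul_le_mul hwk (mul_le_mul hc (mul_le_mul e2 e3 (norm_nonneg _)
            (by positivity)) (by positivity) hC) (by positivity) (by positivity)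
      _ = (t ^ 2) ^ k * (C * (4 * ((j : ℝ) * t ^ j) * t ^ j)) * ‖x‖ := by ring
  calc ‖_ + _‖ ≤ _ + _ := norm_add_le _ _
    _ ≤ C * (t ^ 2) ^ j * (4 * ((k : ℝ) * t ^ k) * t ^ k) * ‖x‖
        + (t ^ 2) ^ k * (C * (4 * ((j : ℝ) * t ^ j) * t ^ j)) * ‖x‖ := add_le_add b1 b2
    _ ≤ 8 * C * M * (t ^ j * t ^ k) * ‖x‖ := by
        rw [← add_mul]; exact mul_le_mul_of_nonneg_right key (norm_nonneg _)

lemma aux_diff {c : ℕ × ℕ → ℂ} {C : ℝ} (hc : ∀ jk, ‖c jk‖ ≤ C) :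
    DifferentiableOn ℂ (fun w : ℂ × ℂ => ∑' jk : ℕ × ℕ, c jk * w.1 ^ jk.1 * w.2 ^ jk.2)
      diskProd := by
  have hC : 0 ≤ C := le_trans (norm_nonneg _) (hc (0,0))
  intro w₀ hw₀
  apply DifferentiableAt.differentiableWithinAt
  set q : ℝ := max ‖w₀.1‖ ‖w₀.2‖ with hq
  have hq0 : 0 ≤ q := le_trans (norm_nonneg _) (le_max_left _ _)
  have hq1 : q < 1 := max_lt hw₀.1 hw₀.2
  set t : ℝ := (q + 1) / 2 with htdef
  have ht : 1 / 2 ≤ t := by rw [htdef]; linarith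
  have ht1 : t < 1 := by rw [htdef]; linarith
  have ht0 : (0:ℝ) < t := lt_of_lt_of_le (by norm_num) ht
  have hqt : q < t ^ 2 := by rw [htdef]; nlinarith
  have ht2 : t ^ 2 < 1 := by nlinarith
  -- the open set
  set s : Set (ℂ × ℂ) := (Metric.ball (0:ℂ) (t^2)) ×ˢ (Metric.ball (0:ℂ) (t^2)) with hs
  have hso : IsOpen s := Metric.isOpen_ball.prod Metric.isOpen_ball
  have hsconn : IsPreconnected s :=
    ((convex_ball (0:ℂ) (t^2)).prod (convex_ball (0:ℂ) (t^2))).isPreconnected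
  have hw₀s : w₀ ∈ s := by
    constructor <;> simp only [Metric.mem_ball, dist_zero_right]
    · exact lt_of_le_of_lt (le_max_left _ _) hqt
    · exact lt_of_le_of_lt (le_max_right _ _) hqt
  -- the bound M
  have hsummt : Summable (fun n : ℕ => (n : ℝ) * t ^ n) := by
    have := summable_pow_mul_geometric_of_norm_lt_one (R := ℝ) 1
      (r := t) (by rw [Real.norm_eq_abs, abs_of_pos ht0]; exact ht1)
    simpa using this
  set M : ℝ := ∑' n : ℕ, (n : ℝ) * t ^ n with hM
  have hMle : ∀ n : ℕ, (n : ℝ) * t ^ n ≤ M :=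
    fun n => Summable.le_tsum hsummt n (fun m _ => by positivity)
  -- summability of the bound series
  have hu : Summable (fun jk : ℕ × ℕ => 8 * C * M * (t ^ jk.1 * t ^ jk.2)) :=
    aux_summable_geom ht0.le ht1 ht0.le ht1
  -- summability at w₀
  have hf0 : Summable (fun jk : ℕ × ℕ => c jk * w₀.1 ^ jk.1 * w₀.2 ^ jk.2) :=
    aux_summable_at hc hw₀
  have hkey : HasFDerivAt (fun w : ℂ × ℂ => ∑' jk : ℕ × ℕ, c jk * w.1 ^ jk.1 * w.2 ^ jk.2)
      (∑' jk : ℕ × ℕ, mder (c jk) jk.1 jk.2 w₀) w₀ := by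
    apply hasFDerivAt_tsum_of_isPreconnected hu hso hsconn
      (fun jk w _ => hasFDerivAt_monomial (c jk) jk.1 jk.2 w) ?_ hw₀s hf0 hw₀s
    intro jk w hws
    have hw1 : ‖w.1‖ ≤ t ^ 2 := le_of_lt (by simpa [dist_zero_right] using hws.1)
    have hw2 : ‖w.2‖ ≤ t ^ 2 := le_of_lt (by simpa [dist_zero_right] using hws.2)
    exact mder_norm_bound (hc jk) ht ht1.le hw1 hw2 hMle jk.1 jk.2
  exact hkey.differentiableAt

lemma zpow_key1 {w₂ : ℂ} (hw : w₂ ≠ 0) (A w₁ : ℂ) (j k : ℕ) :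
    w₂ * (A * (w₁ * w₂) ^ j * w₂ ^ ((k : ℤ) - j - 1)) = A * w₁ ^ j * w₂ ^ k := by
  rw [zpow_sub₀ hw, zpow_sub₀ hw, zpow_one, zpow_natCast, zpow_natCast, mul_pow]
  field_simp

lemma zpow_key2 {z₂ : ℂ} (hz : z₂ ≠ 0) (A z₁ : ℂ) (j k : ℕ) :
    z₂⁻¹ * (A * (z₁ * z₂⁻¹) ^ j * z₂ ^ k) = A * z₁ ^ j * z₂ ^ ((k : ℤ) - j - 1) := by
  rw [zpow_sub₀ hz, zpow_sub₀ hz, zpow_one, zpow_natCast, zpow_natCast, mul_pow]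
  field_simp
  rw [one_div, inv_pow, mul_assoc, inv_mul_cancel₀ (pow_ne_zero j hz), mul_one]

/-- with `Φ(w₁,w₂) = (w₁w₂,w₂)` and complex Jacobian `Φ'(w₁,w₂) = w₂`, the map
`f ↦ Φ'·(f∘Φ)` is a surjective isometry from `H²(ℍ)` (holomorphic
`f = Σ_{j≥0,k≥−j−1} a_{jk} z₁ʲz₂ᵏ` with `‖f‖² = Σ |a_{jk}|² < ∞`) onto the Hardy space
`H²(𝔻×𝔻)` of the bidisc: `Φ'·(f∘Φ)` has only nonnegative powers of `w₂`, extends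
holomorphically to `𝔻×𝔻` with coefficients `b_{jk} = a_{j,k−j−1}`,
`‖Φ'·(f∘Φ)‖²_{H²(𝔻×𝔻)} = ‖f‖²_{H²(ℍ)}`, and every `g ∈ H²(𝔻×𝔻)` arises this way. -/
theorem statement15 :
    (∀ (a : ℕ × ℤ → ℂ) (f : ℂ × ℂ → ℂ),
      (∀ jk : ℕ × ℤ, jk.2 < -(jk.1 : ℤ) - 1 → a jk = 0) →
      Summable (fun jk : ℕ × ℤ => ‖a jk‖ ^ 2) →
      (∀ z ∈ Hartogs, HasSum (fun jk : ℕ × ℤ => a jk * z.1 ^ jk.1 * z.2 ^ jk.2) (f z)) →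
      ∃ g : ℂ × ℂ → ℂ, DifferentiableOn ℂ g diskProd ∧
        (∀ w ∈ diskProd, HasSum
          (fun jk : ℕ × ℕ => a (jk.1, (jk.2 : ℤ) - (jk.1 : ℤ) - 1) * w.1 ^ jk.1 * w.2 ^ jk.2)
          (g w)) ∧
        (∀ w ∈ diskPunct, g w = w.2 * f (Phi w)) ∧
        ∑' jk : ℕ × ℕ, ‖a (jk.1, (jk.2 : ℤ) - (jk.1 : ℤ) - 1)‖ ^ 2 =
          ∑' jk : ℕ × ℤ, ‖a jk‖ ^ 2) ∧
    (∀ (b : ℕ × ℕ → ℂ) (g : ℂ × ℂ → ℂ),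
      Summable (fun jk : ℕ × ℕ => ‖b jk‖ ^ 2) →
      (∀ w ∈ diskProd, HasSum (fun jk : ℕ × ℕ => b jk * w.1 ^ jk.1 * w.2 ^ jk.2) (g w)) →
      ∃ (a : ℕ × ℤ → ℂ) (f : ℂ × ℂ → ℂ),
        (∀ jk : ℕ × ℤ, jk.2 < -(jk.1 : ℤ) - 1 → a jk = 0) ∧
        Summable (fun jk : ℕ × ℤ => ‖a jk‖ ^ 2) ∧
        DifferentiableOn ℂ f Hartogs ∧
        (∀ z ∈ Hartogs, HasSum (fun jk : ℕ × ℤ => a jk * z.1 ^ jk.1 * z.2 ^ jk.2) (f z)) ∧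
        (∀ w ∈ diskPunct, g w = w.2 * f (Phi w)) ∧
        ∑' jk : ℕ × ℕ, ‖b jk‖ ^ 2 = ∑' jk : ℕ × ℤ, ‖a jk‖ ^ 2) := by
  constructor
  · -- forward direction
    intro a f ha hsum hf
    set c : ℕ × ℕ → ℂ := fun jk => a (jk.1, (jk.2 : ℤ) - (jk.1 : ℤ) - 1) with hcdef
    have hbd : ∀ jk : ℕ × ℤ, ‖a jk‖ ≤ Real.sqrt (∑' jk : ℕ × ℤ, ‖a jk‖ ^ 2) := by
      intro jk
      have h1 : ‖a jk‖ ^ 2 ≤ ∑' jk : ℕ × ℤ, ‖a jk‖ ^ 2 :=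
        Summable.le_tsum hsum jk (fun m _ => by positivity)
      calc ‖a jk‖ = Real.sqrt (‖a jk‖ ^ 2) := (Real.sqrt_sq (norm_nonneg _)).symm
        _ ≤ _ := Real.sqrt_le_sqrt h1
    have hc : ∀ jk : ℕ × ℕ, ‖c jk‖ ≤ Real.sqrt (∑' jk : ℕ × ℤ, ‖a jk‖ ^ 2) :=
      fun jk => hbd _
    refine ⟨fun w => ∑' jk : ℕ × ℕ, c jk * w.1 ^ jk.1 * w.2 ^ jk.2,
      aux_diff hc, ?_, ?_, ?_⟩
    · intro w hw
      exact (aux_summable_at hc hw).hasSum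
    · intro w hw
      obtain ⟨hw1, hw2, hw2'⟩ := hw
      have hΦ : Phi w ∈ Hartogs := by
        refine ⟨?_, hw2⟩
        show ‖w.1 * w.2‖ < ‖w.2‖
        rw [norm_mul]
        calc ‖w.1‖ * ‖w.2‖ < 1 * ‖w.2‖ := by
              apply mul_lt_mul_of_pos_right hw1
              exact norm_pos_iff.mpr hw2'
          _ = ‖w.2‖ := one_mul _
      have h0 : ∀ x ∉ Set.range eIdx,
          w.2 * (a x * (Phi w).1 ^ x.1 * (Phi w).2 ^ x.2) = 0 := by
        intro x hx
        have : x.2 < -(x.1 : ℤ) - 1 := by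
          by_contra h
          exact hx (mem_range_eIdx.mpr (by omega))
        rw [ha x this]
        ring
      have h := (hf (Phi w) hΦ).mul_left w.2
      have h2 := (eIdx_inj.hasSum_iff h0).mpr h
      have h3 : ((fun jk : ℕ × ℤ =>
            w.2 * (a jk * (Phi w).1 ^ jk.1 * (Phi w).2 ^ jk.2)) ∘ eIdx)
          = fun jk : ℕ × ℕ => c jk * w.1 ^ jk.1 * w.2 ^ jk.2 := by
        funext jk
        simp only [Function.comp_apply, eIdx, Phi, hcdef]
        exact zpow_key1 hw2' _ w.1 jk.1 jk.2
      rw [h3] at h2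
      exact h2.tsum_eq
    · have hsupp : Function.support (fun jk : ℕ × ℤ => ‖a jk‖ ^ 2) ⊆ Set.range eIdx := by
        intro x hx
        by_contra h
        apply hx
        have hx2 : x.2 < -(x.1 : ℤ) - 1 := by
          by_contra h'
          exact h (mem_range_eIdx.mpr (by omega))
        simp [ha x hx2]
      exact eIdx_inj.tsum_eq hsupp
  · -- backward direction
    intro b g hb hg
    classical
    set a : ℕ × ℤ → ℂ := fun jk =>
      if h : -(jk.1 : ℤ) - 1 ≤ jk.2 then b (jk.1, (jk.2 + jk.1 + 1).toNat) else 0 with hadef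
    have hae : ∀ jk : ℕ × ℕ, a (eIdx jk) = b jk := by
      rintro ⟨j, k⟩
      simp only [hadef, eIdx]
      rw [dif_pos (by omega)]
      have : ((k : ℤ) - j - 1 + j + 1).toNat = k := by omega
      rw [this]
    have ha0 : ∀ jk : ℕ × ℤ, jk.2 < -(jk.1 : ℤ) - 1 → a jk = 0 := by
      intro jk h
      rw [hadef]
      exact dif_neg (by omega)
    have hsupp2 : ∀ x ∉ Set.range eIdx, ‖a x‖ ^ 2 = 0 := by
      intro x hx
      have hx2 : x.2 < -(x.1 : ℤ) - 1 := by
        by_contra h'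
        exact hx (mem_range_eIdx.mpr (by omega))
      simp [ha0 x hx2]
    have hcompeq : ((fun jk : ℕ × ℤ => ‖a jk‖ ^ 2) ∘ eIdx)
        = fun jk : ℕ × ℕ => ‖b jk‖ ^ 2 := by
      funext jk; simp only [Function.comp_apply, hae]
    have hasum : Summable (fun jk : ℕ × ℤ => ‖a jk‖ ^ 2) := by
      apply (eIdx_inj.summable_iff hsupp2).mp
      rw [hcompeq]; exact hb
    -- the extension G
    have hbbd : ∀ jk : ℕ × ℕ, ‖b jk‖ ≤ Real.sqrt (∑' jk : ℕ × ℕ, ‖b jk‖ ^ 2) := by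
      intro jk
      have h1 : ‖b jk‖ ^ 2 ≤ ∑' jk : ℕ × ℕ, ‖b jk‖ ^ 2 :=
        Summable.le_tsum hb jk (fun m _ => by positivity)
      calc ‖b jk‖ = Real.sqrt (‖b jk‖ ^ 2) := (Real.sqrt_sq (norm_nonneg _)).symm
        _ ≤ _ := Real.sqrt_le_sqrt h1
    set G : ℂ × ℂ → ℂ := fun w => ∑' jk : ℕ × ℕ, b jk * w.1 ^ jk.1 * w.2 ^ jk.2 with hGdef
    have hGdiff : DifferentiableOn ℂ G diskProd := aux_diff hbbd
    have hGsum : ∀ w ∈ diskProd,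
        HasSum (fun jk : ℕ × ℕ => b jk * w.1 ^ jk.1 * w.2 ^ jk.2) (G w) :=
      fun w hw => (aux_summable_at hbbd hw).hasSum
    have hgG : ∀ w ∈ diskProd, g w = G w :=
      fun w hw => ((hg w hw).tsum_eq).symm
    -- basic facts about Hartogs
    have hz2ne : ∀ z ∈ Hartogs, z.2 ≠ 0 := by
      intro z hz h0
      have h1 := hz.1
      rw [h0] at h1
      simp only [norm_zero] at h1
      exact (norm_nonneg z.1).not_gt h1
    have hmem : ∀ z ∈ Hartogs, (z.1 * z.2⁻¹, z.2) ∈ diskProd := by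
      intro z hz
      have h2 : 0 < ‖z.2‖ := norm_pos_iff.mpr (hz2ne z hz)
      refine ⟨?_, hz.2⟩
      show ‖z.1 * z.2⁻¹‖ < 1
      rw [norm_mul, norm_inv, ← div_eq_mul_inv]
      exact (div_lt_one h2).mpr hz.1
    refine ⟨a, fun z => z.2⁻¹ * G (z.1 * z.2⁻¹, z.2), ha0, hasum, ?_, ?_, ?_, ?_⟩
    · -- differentiability on Hartogs
      intro z hz
      apply DifferentiableAt.differentiableWithinAt
      have hz2 : z.2 ≠ 0 := hz2ne z hz
      have d1 : DifferentiableAt ℂ (fun z : ℂ × ℂ => z.2⁻¹) z :=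
        differentiableAt_snd.inv hz2
      have d2 : DifferentiableAt ℂ (fun z : ℂ × ℂ => (z.1 * z.2⁻¹, z.2)) z :=
        (differentiableAt_fst.mul (differentiableAt_snd.inv hz2)).prodMk differentiableAt_snd
      have dG : DifferentiableAt ℂ G (z.1 * z.2⁻¹, z.2) :=
        (hGdiff.differentiableAt (isOpen_diskProd.mem_nhds (hmem z hz)))
      exact d1.mul (by have := dG.comp z d2; exact this)
    · -- HasSum on Hartogs
      intro z hz
      have hz2 : z.2 ≠ 0 := hz2ne z hz
      have h := (hGsum _ (hmem z hz)).mul_left z.2⁻¹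
      have hsupp3 : ∀ x ∉ Set.range eIdx, a x * z.1 ^ x.1 * z.2 ^ x.2 = 0 := by
        intro x hx
        have hx2 : x.2 < -(x.1 : ℤ) - 1 := by
          by_contra h'
          exact hx (mem_range_eIdx.mpr (by omega))
        rw [ha0 x hx2]; ring
      apply (eIdx_inj.hasSum_iff hsupp3).mp
      have h3 : ((fun jk : ℕ × ℤ => a jk * z.1 ^ jk.1 * z.2 ^ jk.2) ∘ eIdx)
          = fun jk : ℕ × ℕ =>
            z.2⁻¹ * (b jk * (z.1 * z.2⁻¹) ^ jk.1 * z.2 ^ jk.2) := by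
        funext jk
        rw [Function.comp_apply, hae]
        exact (zpow_key2 hz2 _ z.1 jk.1 jk.2).symm
      rw [h3]
      exact h
    · -- relation on diskPunct
      intro w hw
      obtain ⟨hw1, hw2, hw2'⟩ := hw
      have hmemw : w ∈ diskProd := ⟨hw1, hw2⟩
      have e1 : (Phi w).1 * (Phi w).2⁻¹ = w.1 := by
        simp only [Phi]
        field_simp
      have e2 : (Phi w).2 = w.2 := rfl
      rw [hgG w hmemw]
      show G w = w.2 * ((Phi w).2⁻¹ * G ((Phi w).1 * (Phi w).2⁻¹, (Phi w).2))
      rw [e1, e2]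
      have : (w.1, w.2) = w := rfl
      rw [this]
      field_simp
    · -- norm identity
      rw [← hcompeq]
      exact eIdx_inj.tsum_eq (Function.support_subset_iff'.mpr hsupp2)
end
end

section
/- The Dirichlet space D(ℍ) is a reproducing kernel Hilbert space with kernel K_D((z₁,z₂),(w₁,w₂)) = (1/(z₁\overline{w₁})) log(1/(1 − (z₁\overline{w₁})/(z₂\overline{w₂}))) · log(1/(1 − z₂\overline{w₂})): for all (z₁,z₂),(w₁,w₂) ∈ ℍ with z₁\overline{w₁} ≠ 0, the absolutely convergent series Σ_{j≥0} Σ_{k≥−j} (z₁\overline{w₁})^j (z₂\overline{w₂})^k / ((j+1)(j+k+1)) equals K_D((z₁,z₂),(w₁,w₂)); moreover for each (w₁,w₂) ∈ ℍ the function K_D(·,(w₁,w₂)) belongs to D(ℍ) and f(w₁,w₂) = ⟨f, K_D(·,(w₁,w₂))⟩_D for every f ∈ D(ℍ), where ⟨Σ a_{jk} z₁^j z₂^k, Σ b_{jk} z₁^j z₂^k⟩_D = Σ_{j≥0} Σ_{k≥−j} (j+1)(j+k+1) a_{jk}\overline{b_{jk}}. -/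
open MeasureTheory Real Complex Set Filter
open scoped ENNReal

noncomputable section

/-- The Dirichlet kernel of the Hartogs triangle,
`K_D(z,w) = (1/(z₁w̄₁)) log(1/(1 − z₁w̄₁/(z₂w̄₂))) log(1/(1 − z₂w̄₂))`
(principal branch of the logarithm). -/
def dirKern (z w : ℂ × ℂ) : ℂ :=
  (z.1 * (starRingEnd ℂ) w.1)⁻¹ *
    Complex.log (1 / (1 - z.1 * (starRingEnd ℂ) w.1 / (z.2 * (starRingEnd ℂ) w.2))) *
    Complex.log (1 / (1 - z.2 * (starRingEnd ℂ) w.2))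

/-- The `(j,k)` coefficient of `K_D(·,w)`:
`w̄₁ʲw̄₂ᵏ/((j+1)(j+k+1))` for `k ≥ −j`, and `0` otherwise. -/
def dirKernCoef (w : ℂ × ℂ) (jk : ℕ × ℤ) : ℂ :=
  if -(jk.1 : ℤ) ≤ jk.2 then
    (starRingEnd ℂ) w.1 ^ jk.1 * (starRingEnd ℂ) w.2 ^ jk.2 /
      (((jk.1 : ℂ) + 1) * ((((jk.1 : ℤ) + jk.2 : ℤ) : ℂ) + 1))
  else 0

/-- Taylor series `∑ xⁿ/(n+1) = -log(1-x)/x` on the punctured unit disk. -/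
lemma auxA {x : ℂ} (hx : x ≠ 0) (hx1 : ‖x‖ < 1) :
    HasSum (fun n : ℕ => x ^ n / ((n : ℂ) + 1)) (-Complex.log (1 - x) / x) := by
  have h0 := Complex.hasSum_taylorSeries_neg_log hx1
  have h1 := (hasSum_nat_add_iff' (f := fun n : ℕ => x ^ n / (n : ℂ)) 1).mpr h0
  simp only [Finset.range_one, Finset.sum_singleton, pow_zero, Nat.cast_zero, div_zero,
    sub_zero] at h1
  have h3 : HasSum (fun n : ℕ => x * (x ^ n / ((n : ℂ) + 1))) (-Complex.log (1 - x)) := by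
    refine h1.congr_fun fun n => ?_
    push_cast
    rw [pow_succ]
    ring
  have h4 := h3.mul_left x⁻¹
  simp only [inv_mul_cancel_left₀ hx] at h4
  rw [div_eq_inv_mul]
  exact h4

lemma auxB {y : ℂ} (hy : ‖y‖ < 1) : Complex.log (1 / (1 - y)) = -Complex.log (1 - y) := by
  rw [one_div]
  apply Complex.log_inv
  intro h
  rw [Complex.arg_eq_pi_iff] at h
  have h2 : |y.re| ≤ ‖y‖ := Complex.abs_re_le_norm y
  have h3 := h.1
  simp only [Complex.sub_re, Complex.one_re] at h3
  linarith [(abs_le.mp h2).1, (abs_le.mp h2).2]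

lemma auxNormTerm {x : ℂ} (hx1 : ‖x‖ < 1) :
    Summable (fun n : ℕ => ‖x ^ n / ((n : ℂ) + 1)‖) := by
  refine Summable.of_nonneg_of_le (fun n => norm_nonneg _) (fun n => ?_)
    (summable_geometric_of_lt_one (norm_nonneg x) hx1)
  rw [norm_div, norm_pow]
  have h1 : (1 : ℝ) ≤ ‖((n : ℂ) + 1)‖ := by
    rw [show ((n : ℂ) + 1) = ((n + 1 : ℕ) : ℂ) by push_cast; ring, Complex.norm_natCast]
    exact_mod_cast Nat.one_le_iff_ne_zero.mpr (Nat.succ_ne_zero n)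
  calc ‖x‖ ^ n / ‖((n : ℂ) + 1)‖ ≤ ‖x‖ ^ n / 1 :=
        div_le_div_of_nonneg_left (pow_nonneg (norm_nonneg x) n) one_pos h1 |>.trans_eq rfl
    _ = ‖x‖ ^ n := div_one _

lemma coef_eval (w : ℂ × ℂ) (j m : ℕ) :
    dirKernCoef w (j, (m : ℤ) - (j : ℤ)) =
      (starRingEnd ℂ) w.1 ^ j * (starRingEnd ℂ) w.2 ^ ((m : ℤ) - (j : ℤ)) /
        (((j : ℂ) + 1) * ((m : ℂ) + 1)) := by
  rw [dirKernCoef, if_pos (by omega : -((j : ℤ)) ≤ (m : ℤ) - (j : ℤ))]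
  norm_num

lemma emb_inj : Function.Injective (fun p : ℕ × ℕ => ((p.1, (p.2 : ℤ) - (p.1 : ℤ)) : ℕ × ℤ)) := by
  rintro ⟨j, m⟩ ⟨j', m'⟩ h
  simp only [Prod.mk.injEq] at h
  obtain ⟨h1, h2⟩ := h
  subst h1
  have : m = m' := by omega
  simp [this]

set_option maxHeartbeats 1000000 in
/-- the Dirichlet space `D(ℍ)` is a reproducing kernel Hilbert space with
kernel `K_D`: for `z, w ∈ ℍ` with `z₁w̄₁ ≠ 0`, the absolutely convergent series
`Σ_{j≥0,k≥−j} (z₁w̄₁)ʲ(z₂w̄₂)ᵏ/((j+1)(j+k+1))` equals `K_D(z,w)`; each `K_D(·,w)` belongs to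
`D(ℍ)`; and `f(w) = ⟨f, K_D(·,w)⟩_D` for every `f ∈ D(ℍ)`. -/
theorem statement19 :
    (∀ z ∈ Hartogs, ∀ w ∈ Hartogs, z.1 * (starRingEnd ℂ) w.1 ≠ 0 →
      Summable (fun jm : ℕ × ℕ =>
        ‖(z.1 * (starRingEnd ℂ) w.1) ^ jm.1 *
            (z.2 * (starRingEnd ℂ) w.2) ^ ((jm.2 : ℤ) - (jm.1 : ℤ)) /
          (((jm.1 : ℂ) + 1) * ((jm.2 : ℂ) + 1))‖) ∧
      HasSum (fun jm : ℕ × ℕ =>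
        (z.1 * (starRingEnd ℂ) w.1) ^ jm.1 *
            (z.2 * (starRingEnd ℂ) w.2) ^ ((jm.2 : ℤ) - (jm.1 : ℤ)) /
          (((jm.1 : ℂ) + 1) * ((jm.2 : ℂ) + 1)))
        (dirKern z w)) ∧
    (∀ w ∈ Hartogs,
      Summable (fun jk : ℕ × ℤ =>
        ((jk.1 : ℝ) + 1) * ((((jk.1 : ℤ) + jk.2 : ℤ) : ℝ) + 1) * ‖dirKernCoef w jk‖ ^ 2)) ∧
    (∀ (f : ℂ × ℂ → ℂ) (a : ℕ × ℤ → ℂ),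
      (∀ jk : ℕ × ℤ, jk.2 < -(jk.1 : ℤ) → a jk = 0) →
      Summable (fun jk : ℕ × ℤ =>
        ((jk.1 : ℝ) + 1) * ((((jk.1 : ℤ) + jk.2 : ℤ) : ℝ) + 1) * ‖a jk‖ ^ 2) →
      (∀ z ∈ Hartogs, HasSum (fun jk : ℕ × ℤ => a jk * z.1 ^ jk.1 * z.2 ^ jk.2) (f z)) →
      ∀ w ∈ Hartogs,
        HasSum (fun jk : ℕ × ℤ =>
          ((jk.1 : ℂ) + 1) * ((((jk.1 : ℤ) + jk.2 : ℤ) : ℂ) + 1) * a jk *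
            (starRingEnd ℂ) (dirKernCoef w jk))
          (f w)) := by
  refine ⟨?_, ?_, ?_⟩
  · -- Part 1: the series converges absolutely to the kernel
    intro z hz w hw hu
    simp only [Hartogs, Set.mem_setOf_eq] at hz hw
    obtain ⟨hz1, hz2⟩ := hz
    obtain ⟨hw1, hw2⟩ := hw
    set u := z.1 * (starRingEnd ℂ) w.1 with hu_def
    set v := z.2 * (starRingEnd ℂ) w.2 with hv_def
    have habs : ∀ a : ℂ, ‖(starRingEnd ℂ) a‖ = ‖a‖ := Complex.norm_conj
    have huv : ‖u‖ < ‖v‖ := by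
      simp only [hu_def, hv_def, norm_mul, habs]
      exact mul_lt_mul'' hz1 hw1 (norm_nonneg _) (norm_nonneg _)
    have hv1 : ‖v‖ < 1 := by
      simp only [hv_def, norm_mul, habs]
      calc ‖z.2‖ * ‖w.2‖ < 1 * 1 :=
            mul_lt_mul'' hz2 hw2 (norm_nonneg _) (norm_nonneg _)
        _ = 1 := one_mul 1
    have hv0 : v ≠ 0 := by
      intro h
      rw [h] at huv
      simp at huv
      exact hu (norm_eq_zero.mp (le_antisymm (le_of_lt (by simpa using huv)) (norm_nonneg u)))
    set x := u / v with hx_def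
    have hx0 : x ≠ 0 := div_ne_zero hu hv0
    have hx1 : ‖x‖ < 1 := by
      rw [hx_def, norm_div, div_lt_one (lt_of_le_of_lt (norm_nonneg u) huv)]
      exact huv
    have h1 := auxA hx0 hx1
    have h2 := auxA hv0 hv1
    have hS1 := auxNormTerm hx1
    have hS2 := auxNormTerm hv1
    have hpt : ∀ jm : ℕ × ℕ,
        u ^ jm.1 * v ^ ((jm.2 : ℤ) - (jm.1 : ℤ)) / (((jm.1 : ℂ) + 1) * ((jm.2 : ℂ) + 1)) =
          (x ^ jm.1 / ((jm.1 : ℂ) + 1)) * (v ^ jm.2 / ((jm.2 : ℂ) + 1)) := by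
      rintro ⟨j, m⟩
      have hvj : v ^ (j : ℕ) ≠ 0 := pow_ne_zero _ hv0
      have hj : ((j : ℂ) + 1) ≠ 0 := Nat.cast_add_one_ne_zero j
      have hm : ((m : ℂ) + 1) ≠ 0 := Nat.cast_add_one_ne_zero m
      simp only [hx_def, div_pow]
      rw [zpow_sub₀ hv0, zpow_natCast, zpow_natCast]
      field_simp
    have hprod : Summable (fun jm : ℕ × ℕ =>
        ‖x ^ jm.1 / ((jm.1 : ℂ) + 1)‖ * ‖v ^ jm.2 / ((jm.2 : ℂ) + 1)‖) :=
      hS1.mul_of_nonneg hS2 (fun n => norm_nonneg _) (fun n => norm_nonneg _)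
    have hnorms : Summable (fun jm : ℕ × ℕ =>
        ‖u ^ jm.1 * v ^ ((jm.2 : ℤ) - (jm.1 : ℤ)) / (((jm.1 : ℂ) + 1) * ((jm.2 : ℂ) + 1))‖) :=
      hprod.congr fun jm => by rw [← norm_mul, ← hpt jm]
    refine ⟨hnorms, ?_⟩
    have hprod2 : Summable (fun jm : ℕ × ℕ =>
        (x ^ jm.1 / ((jm.1 : ℂ) + 1)) * (v ^ jm.2 / ((jm.2 : ℂ) + 1))) :=
      Summable.of_norm (hprod.congr fun jm => (norm_mul _ _).symm)
    have hmul := h1.mul h2 hprod2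
    have hval : (-Complex.log (1 - x) / x) * (-Complex.log (1 - v) / v) = dirKern z w := by
      rw [dirKern]
      rw [← hu_def, ← hv_def, ← hx_def, auxB hx1, auxB hv1, hx_def]
      field_simp
    rw [← hval]
    exact hmul.congr_fun (fun jm => (hpt jm))
  · -- Part 2: K_D(·,w) ∈ D(ℍ)
    intro w hw
    simp only [Hartogs, Set.mem_setOf_eq] at hw
    obtain ⟨hw1, hw2⟩ := hw
    set r := ‖w.1‖ with hr_def
    set s := ‖w.2‖ with hs_def
    have hs0 : 0 < s := lt_of_le_of_lt (norm_nonneg _) hw1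
    have hrs : r / s < 1 := (div_lt_one hs0).mpr hw1
    have hrs0 : 0 ≤ r / s := div_nonneg (norm_nonneg _) hs0.le
    refine (emb_inj.summable_iff ?_).mp ?_
    · intro jk hjk
      have hneg : jk.2 < -(jk.1 : ℤ) := by
        by_contra hcon
        push_neg at hcon
        refine hjk ⟨(jk.1, (jk.2 + jk.1).toNat), ?_⟩
        have : ((jk.2 + (jk.1 : ℤ)).toNat : ℤ) - (jk.1 : ℤ) = jk.2 := by omega
        simp only [this]
      rw [dirKernCoef, if_neg (by omega)]
      simp
    · refine Summable.of_nonneg_of_le (fun jm => ?_) (fun jm => ?_)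
        ((summable_geometric_of_lt_one (by positivity) (by nlinarith : (r/s)^2 < 1)).mul_of_nonneg
          (summable_geometric_of_lt_one (by positivity) (by nlinarith : s^2 < 1))
          (fun n => by positivity) (fun n => by positivity))
      · obtain ⟨j, m⟩ := jm
        simp only [Function.comp_apply]
        have hm0 : (0:ℝ) ≤ ((((j : ℤ) + ((m : ℤ) - (j : ℤ)) : ℤ) : ℝ) + 1) := by
          push_cast; linarith [Nat.cast_nonneg (α := ℝ) m, Nat.cast_nonneg (α := ℝ) j]
        have hj0 : (0:ℝ) ≤ (j:ℝ) + 1 := by positivity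
        exact mul_nonneg (mul_nonneg hj0 hm0) (sq_nonneg _)
      · obtain ⟨j, m⟩ := jm
        simp only [Function.comp_apply]
        rw [coef_eval]
        have hnorm : ‖(starRingEnd ℂ) w.1 ^ j * (starRingEnd ℂ) w.2 ^ ((m : ℤ) - (j : ℤ)) /
            (((j : ℂ) + 1) * ((m : ℂ) + 1))‖ =
            (r ^ j * s ^ ((m : ℤ) - (j : ℤ))) / (((j : ℝ) + 1) * ((m : ℝ) + 1)) := by
          rw [norm_div, norm_mul, norm_pow, norm_zpow, norm_mul]
          have e1 : ‖(starRingEnd ℂ) w.1‖ = r := by simp [hr_def]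
          have e2 : ‖(starRingEnd ℂ) w.2‖ = s := by simp [hs_def]
          have e3 : ‖((j : ℂ) + 1)‖ = (j : ℝ) + 1 := by
            rw [show ((j : ℂ) + 1) = ((j + 1 : ℕ) : ℂ) by push_cast; ring, Complex.norm_natCast]
            push_cast
            try ring
          have e4 : ‖((m : ℂ) + 1)‖ = (m : ℝ) + 1 := by
            rw [show ((m : ℂ) + 1) = ((m + 1 : ℕ) : ℂ) by push_cast; ring, Complex.norm_natCast]
            push_cast
            try ring
          rw [e1, e2, e3, e4]
        rw [hnorm]
        have hkey : r ^ j * s ^ ((m : ℤ) - (j : ℤ)) = (r / s) ^ j * s ^ m := by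
          rw [zpow_sub₀ hs0.ne', zpow_natCast, zpow_natCast, div_pow]
          field_simp
        have hden1 : (1 : ℝ) ≤ ((j : ℝ) + 1) * ((m : ℝ) + 1) := by
          nlinarith [Nat.cast_nonneg (α := ℝ) j, Nat.cast_nonneg (α := ℝ) m]
        have hcast : ((((j : ℤ) + ((m : ℤ) - (j : ℤ)) : ℤ) : ℝ) + 1) = (m : ℝ) + 1 := by
          push_cast; ring
        calc ((j : ℝ) + 1) * ((((j : ℤ) + ((m : ℤ) - (j : ℤ)) : ℤ) : ℝ) + 1) *
              ((r ^ j * s ^ ((m : ℤ) - (j : ℤ))) / (((j : ℝ) + 1) * ((m : ℝ) + 1))) ^ 2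
            = ((r / s) ^ j * s ^ m) ^ 2 / (((j : ℝ) + 1) * ((m : ℝ) + 1)) := by
              rw [hcast, hkey, div_pow]
              have hd : (((j : ℝ) + 1) * ((m : ℝ) + 1)) ≠ 0 := by positivity
              field_simp
          _ ≤ ((r / s) ^ j * s ^ m) ^ 2 / 1 := by
              apply div_le_div_of_nonneg_left (sq_nonneg _) one_pos hden1
          _ = ((r / s) ^ 2) ^ j * (s ^ 2) ^ m := by
              rw [div_one, mul_pow, ← pow_mul, ← pow_mul, ← pow_mul', ← pow_mul']
  · -- Part 3: the reproducing property
    intro f a ha _hsum hrep w hw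
    refine (hrep w hw).congr_fun fun jk => ?_
    obtain ⟨j, k⟩ := jk
    by_cases h : -(j : ℤ) ≤ k
    · rw [dirKernCoef, if_pos h]
      have hj : ((j : ℂ) + 1) ≠ 0 := Nat.cast_add_one_ne_zero j
      have hk : ((((j : ℤ) + k : ℤ) : ℂ) + 1) ≠ 0 := by
        have : (((j : ℤ) + k : ℤ) : ℂ) + 1 = ((((j : ℤ) + k + 1) : ℤ) : ℂ) := by push_cast; ring
        rw [this]
        exact_mod_cast (by omega : ((j : ℤ) + k + 1) ≠ 0)
      rw [map_div₀, map_mul, map_mul, map_pow, map_zpow₀]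
      simp only [Complex.conj_conj]
      have hconj1 : (starRingEnd ℂ) ((j : ℂ) + 1) = (j : ℂ) + 1 := by
        rw [map_add, map_one, Complex.conj_natCast]
      have hconj2 : (starRingEnd ℂ) ((((j : ℤ) + k : ℤ) : ℂ) + 1) =
          (((j : ℤ) + k : ℤ) : ℂ) + 1 := by
        rw [map_add, map_one, map_intCast]
      rw [hconj1, hconj2]
      have hD : (((j : ℂ) + 1) * ((((j : ℤ) + k : ℤ) : ℂ) + 1)) ≠ 0 := mul_ne_zero hj hk
      have gen : ∀ (A N c : ℂ), A ≠ 0 → A * c * (N / A) = c * N := by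
        intro A N c hA
        field_simp
      exact (gen (((j : ℂ) + 1) * ((((j : ℤ) + k : ℤ) : ℂ) + 1)) (w.1 ^ j * w.2 ^ k) (a (j, k))
        hD).trans (mul_assoc _ _ _).symm
    · rw [ha (j, k) (by omega), dirKernCoef, if_neg h]
      simp
end
end
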